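/- arXiv:2506.04868 — 7 statements merged into one kernel-verified Lean document; each statement's English description precedes it below -/
import Mathlib

section
/- Assume strong ignorability and positivity, and let e⁰(X) be a version of E[A | σ(X)] with δ ≤ e⁰(X) ≤ 1−δ almost surely. Let m₁, m₀ : 𝒳 → ℝ be arbitrary bounded measurable functions (a possibly misspecified outcome model). Then E[ m₁(X) − m₀(X) + (A / e⁰(X))·(Y − m₁(X)) − ((1−A)/(1 − e⁰(X)))·(Y − m₀(X)) ] = E[Y₁ − Y₀] = τ. -/
open MeasureTheory ProbabilityTheory

open scoped NNReal ENNReal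

/-- The σ-algebra generated by a map. -/
abbrev sigAlg {Ω 𝓧 : Type*} [m𝓧 : MeasurableSpace 𝓧] (X : Ω → 𝓧) : MeasurableSpace Ω :=
  MeasurableSpace.comap X m𝓧

lemma aipw_key {Ω 𝓧 : Type*} [mΩ : MeasurableSpace Ω] [StandardBorelSpace Ω] [MeasurableSpace 𝓧]
    (P : Measure Ω) [IsProbabilityMeasure P]
    (A : Ω → ℝ) (X : Ω → 𝓧) (W : Ω → ℝ × ℝ)
    (hA : Measurable A) (hA01 : ∀ ω, A ω = 0 ∨ A ω = 1) (hX : Measurable X)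
    (hW : Measurable W)
    (hignor : CondIndepFun (MeasurableSpace.comap X inferInstance) hX.comap_le W A P)
    (e0 : 𝓧 → ℝ) (he0 : Measurable e0)
    (hver : (fun ω => e0 (X ω)) =ᵐ[P] P[A | MeasurableSpace.comap X inferInstance])
    (h01 : ∀ᵐ ω ∂P, e0 (X ω) ∈ Set.Icc (0:ℝ) 1)
    (f : Ω → ℝ)
    (hf : StronglyMeasurable[sigAlg X ⊔ sigAlg W] f)
    (hfint : Integrable f P) :
    ∫ ω, A ω * f ω ∂P = ∫ ω, e0 (X ω) * f ω ∂P := by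
  have hmX : sigAlg X ≤ mΩ := hX.comap_le
  have hmW : sigAlg W ≤ mΩ := hW.comap_le
  have h𝓖 : sigAlg X ⊔ sigAlg W ≤ mΩ := sup_le hmX hmW
  set s : Set Ω := A ⁻¹' {1} with hsdef
  have hs : MeasurableSet s := hA (measurableSet_singleton 1)
  have hA_ind : ∀ ω, A ω = s.indicator (fun _ => (1:ℝ)) ω := by
    intro ω
    rcases hA01 ω with h | h
    · have hω : ω ∉ s := by simp [hsdef, h]
      simp [Set.indicator_of_notMem hω, h]
    · have hω : ω ∈ s := by simp [hsdef, h]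
      simp [Set.indicator_of_mem hω, h]
  have hXmX : Measurable[sigAlg X] X := Measurable.of_comap_le le_rfl
  have he0X : Measurable[sigAlg X] (fun ω => e0 (X ω)) := he0.comp hXmX
  have he0Xsm : StronglyMeasurable[sigAlg X] (fun ω => e0 (X ω)) := he0X.stronglyMeasurable
  have hPs : P⟦s | sigAlg X⟧ =ᵐ[P] fun ω => e0 (X ω) := by
    have h1 : P[(Set.indicator s fun _ => (1:ℝ)) | sigAlg X] =ᵐ[P] P[A | sigAlg X] :=
      condExp_congr_ae (Filter.Eventually.of_forall fun ω => (hA_ind ω).symm)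
    exact h1.trans hver.symm
  -- agreement of set integrals on the π-system
  have hagree : ∀ (B : Set 𝓧) (B' : Set (ℝ×ℝ)), MeasurableSet B → MeasurableSet B' →
      ∫ ω in X ⁻¹' B ∩ W ⁻¹' B', e0 (X ω) ∂P = ∫ ω in X ⁻¹' B ∩ W ⁻¹' B', A ω ∂P := by
    intro B B' hB hB'
    set t := W ⁻¹' B' with htdef
    have ht : MeasurableSet t := hW hB'
    have htmW : MeasurableSet[sigAlg W] t := ⟨B', hB', rfl⟩
    have hu : MeasurableSet[sigAlg X] (X ⁻¹' B) := ⟨B, hB, rfl⟩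
    have hind1 : Integrable (Set.indicator t fun _ => (1:ℝ)) P :=
      (integrable_const (1:ℝ)).indicator ht
    have hinde : Integrable ((fun ω => e0 (X ω)) * Set.indicator t fun _ => (1:ℝ)) P := by
      refine Integrable.mono' (integrable_const (1:ℝ))
        (((he0.comp hX).mul (measurable_one.indicator ht)).aestronglyMeasurable) ?_
      filter_upwards [h01] with ω h
      rw [Pi.mul_apply, Real.norm_eq_abs, abs_mul]
      have h2 : |Set.indicator t (fun _ => (1:ℝ)) ω| ≤ 1 := by
        by_cases hω : ω ∈ t <;> simp [Set.indicator_apply, hω]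
      have h3 : |e0 (X ω)| ≤ 1 := abs_le.mpr ⟨by linarith [h.1], h.2⟩
      nlinarith [abs_nonneg (e0 (X ω)), abs_nonneg (Set.indicator t (fun _ => (1:ℝ)) ω)]
    have hindA : Integrable (fun ω => A ω * Set.indicator t (fun _ => (1:ℝ)) ω) P := by
      refine Integrable.mono' (integrable_const (1:ℝ))
        ((hA.mul (measurable_one.indicator ht)).aestronglyMeasurable) ?_
      refine Filter.Eventually.of_forall fun ω => ?_
      rw [Real.norm_eq_abs, abs_mul]
      have h2 : |Set.indicator t (fun _ => (1:ℝ)) ω| ≤ 1 := by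
        by_cases hω : ω ∈ t <;> simp [Set.indicator_apply, hω]
      have h3 : |A ω| ≤ 1 := by rcases hA01 ω with h | h <;> simp [h]
      nlinarith [abs_nonneg (A ω), abs_nonneg (Set.indicator t (fun _ => (1:ℝ)) ω)]
    have hci : P⟦t ∩ s | sigAlg X⟧ =ᵐ[P] P⟦t | sigAlg X⟧ * P⟦s | sigAlg X⟧ :=
      (condIndepFun_iff (sigAlg X) hX.comap_le W A hW hA P).mp hignor t s htmW ⟨{1}, measurableSet_singleton 1, rfl⟩
    have E1 : P[(fun ω => e0 (X ω)) * Set.indicator t (fun _ => (1:ℝ)) | sigAlg X]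
        =ᵐ[P] (fun ω => e0 (X ω)) * P[Set.indicator t (fun _ => (1:ℝ)) | sigAlg X] :=
      condExp_mul_of_stronglyMeasurable_left he0Xsm hinde hind1
    have E2 : P[(fun ω => A ω * Set.indicator t (fun _ => (1:ℝ)) ω) | sigAlg X]
        =ᵐ[P] P⟦t ∩ s | sigAlg X⟧ := by
      refine condExp_congr_ae (Filter.Eventually.of_forall fun ω => ?_)
      show A ω * t.indicator (fun _ => (1:ℝ)) ω = (t ∩ s).indicator (fun _ => (1:ℝ)) ω
      rw [hA_ind ω]
      by_cases h1 : ω ∈ t <;> by_cases h2 : ω ∈ s <;>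
        simp [Set.indicator_apply, h1, h2]
    have hstep : (fun ω => e0 (X ω)) * P[Set.indicator t (fun _ => (1:ℝ)) | sigAlg X]
        =ᵐ[P] P⟦t ∩ s | sigAlg X⟧ := by
      refine Filter.EventuallyEq.trans ?_ hci.symm
      filter_upwards [hPs] with ω h
      simp only [Pi.mul_apply]
      rw [mul_comm, h]
    have hmid : P[(fun ω => e0 (X ω)) * Set.indicator t (fun _ => (1:ℝ)) | sigAlg X]
        =ᵐ[P] P[(fun ω => A ω * Set.indicator t (fun _ => (1:ℝ)) ω) | sigAlg X] :=
      E1.trans (hstep.trans E2.symm)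
    calc ∫ ω in X ⁻¹' B ∩ t, e0 (X ω) ∂P
        = ∫ ω in X ⁻¹' B, Set.indicator t (fun ω => e0 (X ω)) ω ∂P :=
          (setIntegral_indicator ht).symm
      _ = ∫ ω in X ⁻¹' B, ((fun ω => e0 (X ω)) * Set.indicator t fun _ => (1:ℝ)) ω ∂P := by
          refine setIntegral_congr_fun (hX hB) fun ω _ => ?_
          by_cases h : ω ∈ t <;> simp [Set.indicator_apply, h]
      _ = ∫ ω in X ⁻¹' B,
            (P[(fun ω => e0 (X ω)) * Set.indicator t (fun _ => (1:ℝ)) | sigAlg X]) ω ∂P :=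
          (setIntegral_condExp hmX hinde hu).symm
      _ = ∫ ω in X ⁻¹' B,
            (P[(fun ω => A ω * Set.indicator t (fun _ => (1:ℝ)) ω) | sigAlg X]) ω ∂P :=
          setIntegral_congr_ae (hmX _ hu) (hmid.mono fun ω h _ => h)
      _ = ∫ ω in X ⁻¹' B, A ω * Set.indicator t (fun _ => (1:ℝ)) ω ∂P :=
          setIntegral_condExp hmX hindA hu
      _ = ∫ ω in X ⁻¹' B, Set.indicator t A ω ∂P := by
          refine setIntegral_congr_fun (hX hB) fun ω _ => ?_
          by_cases h : ω ∈ t <;> simp [Set.indicator_apply, h]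
      _ = ∫ ω in X ⁻¹' B ∩ t, A ω ∂P := setIntegral_indicator ht
  -- two finite measures
  set ρ : Ω → ℝ≥0 := fun ω => (e0 (X ω)).toNNReal with hρdef
  have hρ : Measurable ρ := (he0.comp hX).real_toNNReal
  set μ₁ := P.withDensity (fun ω => (ρ ω : ENNReal)) with hμ₁def
  set μ₂ := P.restrict s with hμ₂def
  haveI : IsFiniteMeasure μ₁ := by
    refine isFiniteMeasure_withDensity (μ := P) (f := fun ω => (ρ ω : ENNReal)) ?_
    have hb : ∫⁻ ω, (ρ ω : ENNReal) ∂P ≤ ∫⁻ _, 1 ∂P := by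
      refine lintegral_mono_ae (h01.mono fun ω h => ?_)
      simp only [hρdef]
      exact_mod_cast ENNReal.coe_le_one_iff.mpr (Real.toNNReal_le_one.mpr h.2)
    refine ne_top_of_le_ne_top ?_ hb
    simp
  haveI : IsFiniteMeasure μ₂ := by
    rw [hμ₂def]; infer_instance
  have hμeq : ∀ (B : Set 𝓧) (B' : Set (ℝ×ℝ)), MeasurableSet B → MeasurableSet B' →
      μ₁ (X ⁻¹' B ∩ W ⁻¹' B') = μ₂ (X ⁻¹' B ∩ W ⁻¹' B') := by
    intro B B' hB hB'
    have hG : MeasurableSet (X ⁻¹' B ∩ W ⁻¹' B') := (hX hB).inter (hW hB')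
    rw [← ENNReal.toReal_eq_toReal_iff' (measure_ne_top _ _) (measure_ne_top _ _)]
    have e1 : (μ₁ (X ⁻¹' B ∩ W ⁻¹' B')).toReal = ∫ ω in X ⁻¹' B ∩ W ⁻¹' B', e0 (X ω) ∂P := by
      rw [hμ₁def, withDensity_apply _ hG,
        integral_eq_lintegral_of_nonneg_ae
          (ae_restrict_of_ae (h01.mono fun ω h => h.1))
          ((he0.comp hX).aestronglyMeasurable.restrict)]
      rfl
    have e2 : (μ₂ (X ⁻¹' B ∩ W ⁻¹' B')).toReal = ∫ ω in X ⁻¹' B ∩ W ⁻¹' B', A ω ∂P := by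
      rw [hμ₂def, Measure.restrict_apply hG]
      have : ∫ ω in X ⁻¹' B ∩ W ⁻¹' B', A ω ∂P
          = ∫ ω in X ⁻¹' B ∩ W ⁻¹' B', s.indicator (fun _ => (1:ℝ)) ω ∂P :=
        setIntegral_congr_fun hG fun ω _ => hA_ind ω
      rw [this, setIntegral_indicator hs, setIntegral_const]
      simp [Measure.real]
    rw [e1, e2]
    exact hagree B B' hB hB'
  -- the generated σ-algebra and π-system
  set C : Set (Set Ω) :=
    {G | ∃ B B', MeasurableSet B ∧ MeasurableSet B' ∧ G = X ⁻¹' B ∩ W ⁻¹' B'} with hCdef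
  have hCgen : sigAlg X ⊔ sigAlg W = MeasurableSpace.generateFrom C := by
    apply le_antisymm
    · refine sup_le ?_ ?_
      · intro G hG
        obtain ⟨B, hB, rfl⟩ := hG
        exact MeasurableSpace.measurableSet_generateFrom
          ⟨B, Set.univ, hB, MeasurableSet.univ, by simp⟩
      · intro G hG
        obtain ⟨B', hB', rfl⟩ := hG
        exact MeasurableSpace.measurableSet_generateFrom
          ⟨Set.univ, B', MeasurableSet.univ, hB', by simp⟩
    · refine MeasurableSpace.generateFrom_le ?_
      rintro G ⟨B, B', hB, hB', rfl⟩
      exact MeasurableSet.inter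
        ((le_sup_left : sigAlg X ≤ sigAlg X ⊔ sigAlg W) _ ⟨B, hB, rfl⟩)
        ((le_sup_right : sigAlg W ≤ sigAlg X ⊔ sigAlg W) _ ⟨B', hB', rfl⟩)
  have hCpi : IsPiSystem C := by
    rintro G1 ⟨B1, B1', h1, h1', rfl⟩ G2 ⟨B2, B2', h2, h2', rfl⟩ -
    refine ⟨B1 ∩ B2, B1' ∩ B2', h1.inter h2, h1'.inter h2', ?_⟩
    ext ω; simp [Set.mem_inter_iff]; tauto
  have htrim : μ₁.trim h𝓖 = μ₂.trim h𝓖 := by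
    refine ext_of_generate_finite (m0 := sigAlg X ⊔ sigAlg W) C hCgen hCpi ?_ ?_
    · intro G hG
      have hGmeas : MeasurableSet[sigAlg X ⊔ sigAlg W] G :=
        hCgen ▸ MeasurableSpace.measurableSet_generateFrom hG
      rw [trim_measurableSet_eq h𝓖 hGmeas, trim_measurableSet_eq h𝓖 hGmeas]
      obtain ⟨B, B', hB, hB', rfl⟩ := hG
      exact hμeq B B' hB hB'
    · rw [trim_measurableSet_eq h𝓖 MeasurableSet.univ,
        trim_measurableSet_eq h𝓖 MeasurableSet.univ]
      have := hμeq Set.univ Set.univ MeasurableSet.univ MeasurableSet.univ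
      simpa using this
  -- final chain
  calc ∫ ω, A ω * f ω ∂P
      = ∫ ω, s.indicator f ω ∂P := by
        refine integral_congr_ae (Filter.Eventually.of_forall fun ω => ?_)
        show A ω * f ω = s.indicator f ω
        rw [hA_ind ω]
        by_cases h : ω ∈ s <;>
          simp [Set.indicator_of_mem, Set.indicator_of_notMem, h]
    _ = ∫ ω, f ω ∂μ₂ := by rw [integral_indicator hs, hμ₂def]
    _ = ∫ ω, f ω ∂(μ₂.trim h𝓖) := integral_trim h𝓖 hf
    _ = ∫ ω, f ω ∂(μ₁.trim h𝓖) := by rw [htrim]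
    _ = ∫ ω, f ω ∂μ₁ := (integral_trim h𝓖 hf).symm
    _ = ∫ ω, ρ ω • f ω ∂P := by rw [hμ₁def]; exact integral_withDensity_eq_integral_smul hρ f
    _ = ∫ ω, e0 (X ω) * f ω ∂P := by
        refine integral_congr_ae (h01.mono fun ω h => ?_)
        simp [hρdef, NNReal.smul_def, Real.coe_toNNReal _ h.1]

/-- Double robustness of the AIPW functional, propensity-score-correct half:
under strong ignorability and positivity, with the true propensity score `e⁰(X)`
(a version of `E[A | σ(X)]`) and arbitrary bounded measurable outcome models `m₁, m₀`,
`E[ m₁(X) − m₀(X) + (A/e⁰(X))·(Y − m₁(X)) − ((1−A)/(1−e⁰(X)))·(Y − m₀(X)) ] = E[Y₁ − Y₀] = τ`. -/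
theorem stmt5 {Ω 𝓧 : Type*} [MeasurableSpace Ω] [StandardBorelSpace Ω] [MeasurableSpace 𝓧]
    (P : Measure Ω) [IsProbabilityMeasure P]
    (A : Ω → ℝ) (X : Ω → 𝓧) (Y₁ Y₀ Y : Ω → ℝ)
    (hA : Measurable A) (hA01 : ∀ ω, A ω = 0 ∨ A ω = 1) (hX : Measurable X)
    (hY₁ : Integrable Y₁ P) (hY₀ : Integrable Y₀ P)
    (hYmeas : Measurable Y₁ ∧ Measurable Y₀)
    (hY : ∀ ω, Y ω = A ω * Y₁ ω + (1 - A ω) * Y₀ ω)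
    (hignor : CondIndepFun (MeasurableSpace.comap X inferInstance) hX.comap_le
      (fun ω => (Y₁ ω, Y₀ ω)) A P)
    (e0 : 𝓧 → ℝ) (he0 : Measurable e0)
    (hver : (fun ω => e0 (X ω)) =ᵐ[P] P[A | MeasurableSpace.comap X inferInstance])
    (δ : ℝ) (hδ : δ ∈ Set.Ioo (0 : ℝ) (1 / 2))
    (hpos : ∀ᵐ ω ∂P, e0 (X ω) ∈ Set.Icc δ (1 - δ))
    (m₁ m₀ : 𝓧 → ℝ) (hm₁ : Measurable m₁) (hm₀ : Measurable m₀)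
    (hm₁bd : ∃ C : ℝ, ∀ x, |m₁ x| ≤ C) (hm₀bd : ∃ C : ℝ, ∀ x, |m₀ x| ≤ C)
    (τ : ℝ) (hτ : τ = ∫ ω, (Y₁ ω - Y₀ ω) ∂P) :
    ∫ ω, (m₁ (X ω) - m₀ (X ω)
        + (A ω / e0 (X ω)) * (Y ω - m₁ (X ω))
        - ((1 - A ω) / (1 - e0 (X ω))) * (Y ω - m₀ (X ω))) ∂P = τ := by
  obtain ⟨hmY₁, hmY₀⟩ := hYmeas
  obtain ⟨C₁, hC₁⟩ := hm₁bd
  obtain ⟨C₀, hC₀⟩ := hm₀bd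
  have hδ0 : (0:ℝ) < δ := hδ.1
  have hC₁' : ∀ x, |m₁ x| ≤ |C₁| := fun x => (hC₁ x).trans (le_abs_self _)
  have hC₀' : ∀ x, |m₀ x| ≤ |C₀| := fun x => (hC₀ x).trans (le_abs_self _)
  set W : Ω → ℝ × ℝ := fun ω => (Y₁ ω, Y₀ ω) with hWdef
  have hW : Measurable W := hmY₁.prodMk hmY₀
  have h01 : ∀ᵐ ω ∂P, e0 (X ω) ∈ Set.Icc (0:ℝ) 1 :=
    hpos.mono fun ω h => ⟨le_trans hδ0.le h.1, le_trans h.2 (by linarith)⟩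
  -- measurability w.r.t. the join
  have hXmX : Measurable[sigAlg X] X := Measurable.of_comap_le le_rfl
  have hWmW : Measurable[sigAlg W] W := Measurable.of_comap_le le_rfl
  have hY₁G : Measurable[sigAlg X ⊔ sigAlg W] Y₁ :=
    (measurable_fst.comp hWmW).mono le_sup_right le_rfl
  have hY₀G : Measurable[sigAlg X ⊔ sigAlg W] Y₀ :=
    (measurable_snd.comp hWmW).mono le_sup_right le_rfl
  have he0G : Measurable[sigAlg X ⊔ sigAlg W] (fun ω => e0 (X ω)) :=
    (he0.comp hXmX).mono le_sup_left le_rfl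
  have hm₁G : Measurable[sigAlg X ⊔ sigAlg W] (fun ω => m₁ (X ω)) :=
    (hm₁.comp hXmX).mono le_sup_left le_rfl
  have hm₀G : Measurable[sigAlg X ⊔ sigAlg W] (fun ω => m₀ (X ω)) :=
    (hm₀.comp hXmX).mono le_sup_left le_rfl
  set f₁ : Ω → ℝ := fun ω => (Y₁ ω - m₁ (X ω)) / e0 (X ω) with hf₁def
  set f₀ : Ω → ℝ := fun ω => (Y₀ ω - m₀ (X ω)) / (1 - e0 (X ω)) with hf₀def
  have hf₁G : StronglyMeasurable[sigAlg X ⊔ sigAlg W] f₁ :=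
    ((hY₁G.sub hm₁G).div he0G).stronglyMeasurable
  have hf₀G : StronglyMeasurable[sigAlg X ⊔ sigAlg W] f₀ :=
    ((hY₀G.sub hm₀G).div (measurable_const.sub he0G)).stronglyMeasurable
  have hf₁meas : Measurable f₁ := (hmY₁.sub (hm₁.comp hX)).div (he0.comp hX)
  have hf₀meas : Measurable f₀ := (hmY₀.sub (hm₀.comp hX)).div (measurable_const.sub (he0.comp hX))
  -- integrability
  have hm₁Xint : Integrable (fun ω => m₁ (X ω)) P := by
    refine Integrable.mono' (integrable_const |C₁|) (hm₁.comp hX).aestronglyMeasurable ?_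
    exact Filter.Eventually.of_forall fun ω => by rw [Real.norm_eq_abs]; exact hC₁' _
  have hm₀Xint : Integrable (fun ω => m₀ (X ω)) P := by
    refine Integrable.mono' (integrable_const |C₀|) (hm₀.comp hX).aestronglyMeasurable ?_
    exact Filter.Eventually.of_forall fun ω => by rw [Real.norm_eq_abs]; exact hC₀' _
  have hf₁int : Integrable f₁ P := by
    refine Integrable.mono' (((hY₁.abs.add (integrable_const |C₁|)).div_const δ))
      hf₁meas.aestronglyMeasurable ?_
    filter_upwards [hpos] with ω h
    have h1 : δ ≤ |e0 (X ω)| := h.1.trans (le_abs_self _)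
    rw [Real.norm_eq_abs]
    show |(Y₁ ω - m₁ (X ω)) / e0 (X ω)| ≤ (|Y₁ ω| + |C₁|) / δ
    rw [abs_div]
    refine div_le_div₀ (by positivity) ?_ hδ0 h1
    calc |Y₁ ω - m₁ (X ω)| ≤ |Y₁ ω| + |m₁ (X ω)| := abs_sub _ _
      _ ≤ |Y₁ ω| + |C₁| := by linarith [hC₁' (X ω)]
  have hf₀int : Integrable f₀ P := by
    refine Integrable.mono' (((hY₀.abs.add (integrable_const |C₀|)).div_const δ))
      hf₀meas.aestronglyMeasurable ?_
    filter_upwards [hpos] with ω h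
    have h1 : δ ≤ |1 - e0 (X ω)| := (by linarith [h.2] : δ ≤ 1 - e0 (X ω)).trans (le_abs_self _)
    rw [Real.norm_eq_abs]
    show |(Y₀ ω - m₀ (X ω)) / (1 - e0 (X ω))| ≤ (|Y₀ ω| + |C₀|) / δ
    rw [abs_div]
    refine div_le_div₀ (by positivity) ?_ hδ0 h1
    calc |Y₀ ω - m₀ (X ω)| ≤ |Y₀ ω| + |m₀ (X ω)| := abs_sub _ _
      _ ≤ |Y₀ ω| + |C₀| := by linarith [hC₀' (X ω)]
  have habsA : ∀ ω, |A ω| ≤ 1 := fun ω => by rcases hA01 ω with h | h <;> simp [h]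
  have hAf₁int : Integrable (fun ω => A ω * f₁ ω) P := by
    refine Integrable.mono' hf₁int.abs (hA.mul hf₁meas).aestronglyMeasurable ?_
    refine Filter.Eventually.of_forall fun ω => ?_
    rw [Real.norm_eq_abs, abs_mul]
    nlinarith [habsA ω, abs_nonneg (A ω), abs_nonneg (f₁ ω)]
  have hAf₀int : Integrable (fun ω => A ω * f₀ ω) P := by
    refine Integrable.mono' hf₀int.abs (hA.mul hf₀meas).aestronglyMeasurable ?_
    refine Filter.Eventually.of_forall fun ω => ?_
    rw [Real.norm_eq_abs, abs_mul]
    nlinarith [habsA ω, abs_nonneg (A ω), abs_nonneg (f₀ ω)]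
  have he0f₀int : Integrable (fun ω => e0 (X ω) * f₀ ω) P := by
    refine Integrable.mono' hf₀int.abs ((he0.comp hX).mul hf₀meas).aestronglyMeasurable ?_
    filter_upwards [h01] with ω h
    rw [Real.norm_eq_abs, abs_mul]
    have : |e0 (X ω)| ≤ 1 := abs_le.mpr ⟨by linarith [h.1], h.2⟩
    nlinarith [abs_nonneg (e0 (X ω)), abs_nonneg (f₀ ω)]
  have h1Af₀int : Integrable (fun ω => (1 - A ω) * f₀ ω) P :=
    (hf₀int.sub hAf₀int).congr
      (Filter.Eventually.of_forall fun ω => by simp only [Pi.sub_apply]; ring)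
  -- the two key identities
  have K1 : ∫ ω, A ω * f₁ ω ∂P = ∫ ω, (Y₁ ω - m₁ (X ω)) ∂P := by
    rw [aipw_key P A X W hA hA01 hX hW hignor e0 he0 hver h01 f₁ hf₁G hf₁int]
    refine integral_congr_ae (hpos.mono fun ω h => ?_)
    have hne : e0 (X ω) ≠ 0 := by intro h0; rw [h0] at h; linarith [h.1]
    show e0 (X ω) * ((Y₁ ω - m₁ (X ω)) / e0 (X ω)) = Y₁ ω - m₁ (X ω)
    rw [mul_comm, div_mul_cancel₀ _ hne]
  have K0 : ∫ ω, (1 - A ω) * f₀ ω ∂P = ∫ ω, (Y₀ ω - m₀ (X ω)) ∂P := by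
    have h2 : ∫ ω, (1 - A ω) * f₀ ω ∂P = ∫ ω, f₀ ω ∂P - ∫ ω, A ω * f₀ ω ∂P := by
      rw [← integral_sub hf₀int hAf₀int]
      exact integral_congr_ae (Filter.Eventually.of_forall fun ω => by ring)
    rw [h2, aipw_key P A X W hA hA01 hX hW hignor e0 he0 hver h01 f₀ hf₀G hf₀int,
      ← integral_sub hf₀int he0f₀int]
    refine integral_congr_ae (hpos.mono fun ω h => ?_)
    have hne : (1:ℝ) - e0 (X ω) ≠ 0 := by intro h0; have : e0 (X ω) = 1 := by linarith
                                          rw [this] at h; linarith [h.2]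
    show f₀ ω - e0 (X ω) * f₀ ω = Y₀ ω - m₀ (X ω)
    have he : f₀ ω - e0 (X ω) * f₀ ω = (1 - e0 (X ω)) * f₀ ω := by ring
    rw [he]
    show (1 - e0 (X ω)) * ((Y₀ ω - m₀ (X ω)) / (1 - e0 (X ω))) = Y₀ ω - m₀ (X ω)
    rw [mul_comm, div_mul_cancel₀ _ hne]
  -- rewrite the integrand
  have hintg : ∀ ω, (m₁ (X ω) - m₀ (X ω)
        + (A ω / e0 (X ω)) * (Y ω - m₁ (X ω))
        - ((1 - A ω) / (1 - e0 (X ω))) * (Y ω - m₀ (X ω)))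
      = (m₁ (X ω) - m₀ (X ω)) + A ω * f₁ ω - (1 - A ω) * f₀ ω := by
    intro ω
    show _ = (m₁ (X ω) - m₀ (X ω)) + A ω * ((Y₁ ω - m₁ (X ω)) / e0 (X ω))
        - (1 - A ω) * ((Y₀ ω - m₀ (X ω)) / (1 - e0 (X ω)))
    rw [hY ω]
    rcases hA01 ω with h | h <;> rw [h] <;> ring
  have hmdiff : Integrable (fun ω => m₁ (X ω) - m₀ (X ω)) P := hm₁Xint.sub hm₀Xint
  calc ∫ ω, (m₁ (X ω) - m₀ (X ω)
        + (A ω / e0 (X ω)) * (Y ω - m₁ (X ω))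
        - ((1 - A ω) / (1 - e0 (X ω))) * (Y ω - m₀ (X ω))) ∂P
      = ∫ ω, ((m₁ (X ω) - m₀ (X ω)) + A ω * f₁ ω - (1 - A ω) * f₀ ω) ∂P :=
        integral_congr_ae (Filter.Eventually.of_forall hintg)
    _ = (∫ ω, (m₁ (X ω) - m₀ (X ω)) ∂P + ∫ ω, A ω * f₁ ω ∂P)
          - ∫ ω, (1 - A ω) * f₀ ω ∂P := by
        have hsum : Integrable (fun ω => (m₁ (X ω) - m₀ (X ω)) + A ω * f₁ ω) P :=
          hmdiff.add hAf₁int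
        rw [integral_sub hsum h1Af₀int, integral_add hmdiff hAf₁int]
    _ = τ := by
        rw [K1, K0, hτ, integral_sub hm₁Xint hm₀Xint, integral_sub hY₁ hm₁Xint,
          integral_sub hY₀ hm₀Xint, integral_sub hY₁ hY₀]
        ring
end

section
/- Assume strong ignorability and positivity, with the true propensity score e⁰(X), a version of E[A | σ(X)], satisfying δ ≤ e⁰(X) ≤ 1−δ almost surely. Let m₁, m₀ : 𝒳 → ℝ be measurable and integrable functions that are correctly specified, i.e. E[A·Y | σ(X)] = m₁(X)·e⁰(X) and E[(1−A)·Y | σ(X)] = m₀(X)·(1 − e⁰(X)) almost surely. Let e : 𝒳 → [δ′, 1−δ′] be an arbitrary measurable function with δ′ ∈ (0, 1/2) (a possibly misspecified propensity model). Then E[ m₁(X) − m₀(X) + (A / e(X))·(Y − m₁(X)) − ((1−A)/(1 − e(X)))·(Y − m₀(X)) ] = E[Y₁ − Y₀] = τ. -/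
open MeasureTheory ProbabilityTheory

lemma aux_ae_indepFun {Ω : Type*} {m : MeasurableSpace Ω} [mΩ : MeasurableSpace Ω] [StandardBorelSpace Ω]
    (hm : m ≤ mΩ) (P : Measure Ω) [IsProbabilityMeasure P]
    {f g : Ω → ℝ} (hf : Measurable f) (hg : Measurable g)
    (hind : CondIndepFun m hm f g P) :
    ∀ᵐ ω ∂P, IndepFun f g (condExpKernel P m ω) := by
  have h : ∀ᵐ ω ∂P, ∀ (q r : ℚ),
      condExpKernel P m ω (f ⁻¹' Set.Iio (q:ℝ) ∩ g ⁻¹' Set.Iio (r:ℝ))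
        = condExpKernel P m ω (f ⁻¹' Set.Iio (q:ℝ))
          * condExpKernel P m ω (g ⁻¹' Set.Iio (r:ℝ)) := by
    rw [ae_all_iff]; intro q; rw [ae_all_iff]; intro r
    refine ae_of_ae_trim hm ?_
    exact hind _ _ ⟨Set.Iio (q:ℝ), measurableSet_Iio, rfl⟩
      ⟨Set.Iio (r:ℝ), measurableSet_Iio, rfl⟩
  filter_upwards [h] with ω hω
  set C : Set (Set ℝ) := ⋃ a : ℚ, {Set.Iio (a:ℝ)} with hC
  have hp1 : IsPiSystem ((fun s => f ⁻¹' s) '' C) := Real.isPiSystem_Iio_rat.comap f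
  have hp2 : IsPiSystem ((fun s => g ⁻¹' s) '' C) := Real.isPiSystem_Iio_rat.comap g
  have hgen1 : MeasurableSpace.comap f (borel ℝ)
      = MeasurableSpace.generateFrom ((fun s => f ⁻¹' s) '' C) := by
    rw [Real.borel_eq_generateFrom_Iio_rat, MeasurableSpace.comap_generateFrom]
  have hgen2 : MeasurableSpace.comap g (borel ℝ)
      = MeasurableSpace.generateFrom ((fun s => g ⁻¹' s) '' C) := by
    rw [Real.borel_eq_generateFrom_Iio_rat, MeasurableSpace.comap_generateFrom]
  have hsets : IndepSets ((fun s => f ⁻¹' s) '' C) ((fun s => g ⁻¹' s) '' C)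
      (condExpKernel P m ω) := by
    rw [IndepSets_iff]
    rintro t1 t2 ⟨s1, hs1, rfl⟩ ⟨s2, hs2, rfl⟩
    simp only [hC, Set.mem_iUnion, Set.mem_singleton_iff] at hs1 hs2
    obtain ⟨q, rfl⟩ := hs1
    obtain ⟨r, rfl⟩ := hs2
    exact hω q r
  have hb : (Real.measurableSpace : MeasurableSpace ℝ) = borel ℝ := rfl
  have hle1 : MeasurableSpace.comap f (borel ℝ) ≤ mΩ := by rw [← hb]; exact hf.comap_le
  have hle2 : MeasurableSpace.comap g (borel ℝ) ≤ mΩ := by rw [← hb]; exact hg.comap_le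
  have hind2 : Indep (MeasurableSpace.comap f (borel ℝ)) (MeasurableSpace.comap g (borel ℝ))
      (condExpKernel P m ω) :=
    IndepSets.indep hle1 hle2 hp1 hp2 hgen1 hgen2 hsets
  show Indep (MeasurableSpace.comap f Real.measurableSpace) (MeasurableSpace.comap g Real.measurableSpace) _
  rw [hb]
  exact hind2

lemma aux_condexp_mul {Ω : Type*} {m : MeasurableSpace Ω} [mΩ : MeasurableSpace Ω] [StandardBorelSpace Ω]
    (hm : m ≤ mΩ) (P : Measure Ω) [IsProbabilityMeasure P]
    {f g : Ω → ℝ} (hf : Measurable f) (hg : Measurable g)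
    (hfi : Integrable f P) (hgi : Integrable g P)
    (hfgi : Integrable (fun ω => f ω * g ω) P)
    (hind : CondIndepFun m hm f g P) :
    P[fun ω => f ω * g ω|m] =ᵐ[P] fun ω => (P[f|m]) ω * (P[g|m]) ω := by
  have hae := aux_ae_indepFun hm P hf hg hind
  have h1 := condExp_ae_eq_integral_condExpKernel hm hfgi
  have h2 := condExp_ae_eq_integral_condExpKernel hm hfi
  have h3 := condExp_ae_eq_integral_condExpKernel hm hgi
  have h4 := hfi.condExpKernel_ae (m := m)
  have h5 := hgi.condExpKernel_ae (m := m)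
  filter_upwards [hae, h1, h2, h3, h4, h5] with ω hω e1 e2 e3 e4 e5
  rw [e1, e2, e3]
  have := hω.integral_fun_mul_eq_mul_integral e4.aestronglyMeasurable e5.aestronglyMeasurable
  simpa [Pi.mul_apply] using this

theorem stmt6_aux {Ω 𝓧 : Type*} {m : MeasurableSpace Ω}
    [MeasurableSpace Ω] [StandardBorelSpace Ω] [MeasurableSpace 𝓧]
    (hm : m ≤ ‹MeasurableSpace Ω›)
    (P : Measure Ω) [IsProbabilityMeasure P]
    (A : Ω → ℝ) (X : Ω → 𝓧) (Y₁ Y₀ Y : Ω → ℝ)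
    (hA : Measurable A) (hA01 : ∀ ω, A ω = 0 ∨ A ω = 1) (hX : Measurable X)
    (hXm : Measurable[m] X)
    (hY₁ : Integrable Y₁ P) (hY₀ : Integrable Y₀ P)
    (hYmeas : Measurable Y₁ ∧ Measurable Y₀)
    (hY : ∀ ω, Y ω = A ω * Y₁ ω + (1 - A ω) * Y₀ ω)
    (hignor : CondIndepFun m hm (fun ω => (Y₁ ω, Y₀ ω)) A P)
    (e0 : 𝓧 → ℝ) (he0 : Measurable e0)
    (hver : (fun ω => e0 (X ω)) =ᵐ[P] P[A | m])
    (δ : ℝ) (hδ : δ ∈ Set.Ioo (0 : ℝ) (1 / 2))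
    (hpos : ∀ᵐ ω ∂P, e0 (X ω) ∈ Set.Icc δ (1 - δ))
    (m₁ m₀ : 𝓧 → ℝ) (hm₁ : Measurable m₁) (hm₀ : Measurable m₀)
    (hm₁int : Integrable (fun ω => m₁ (X ω)) P)
    (hm₀int : Integrable (fun ω => m₀ (X ω)) P)
    (hcorr₁ : (fun ω => m₁ (X ω) * e0 (X ω))
      =ᵐ[P] P[fun ω => A ω * Y ω | m])
    (hcorr₀ : (fun ω => m₀ (X ω) * (1 - e0 (X ω)))
      =ᵐ[P] P[fun ω => (1 - A ω) * Y ω | m])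
    (δ' : ℝ) (hδ' : δ' ∈ Set.Ioo (0 : ℝ) (1 / 2))
    (e : 𝓧 → ℝ) (he : Measurable e) (hebd : ∀ x, e x ∈ Set.Icc δ' (1 - δ'))
    (τ : ℝ) (hτ : τ = ∫ ω, (Y₁ ω - Y₀ ω) ∂P) :
    ∫ ω, (m₁ (X ω) - m₀ (X ω)
        + (A ω / e (X ω)) * (Y ω - m₁ (X ω))
        - ((1 - A ω) / (1 - e (X ω))) * (Y ω - m₀ (X ω))) ∂P = τ := by
  obtain ⟨hY₁m, hY₀m⟩ := hYmeas
  obtain ⟨hδ0, hδhalf⟩ := hδ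
  obtain ⟨hδ'0, hδ'half⟩ := hδ'
  -- basic bounds and measurability
  have hAbd : ∀ ω, ‖A ω‖ ≤ 1 := by intro ω; rcases hA01 ω with h | h <;> simp [h]
  have h1Abd : ∀ ω, ‖1 - A ω‖ ≤ 1 := by intro ω; rcases hA01 ω with h | h <;> simp [h]
  have hYeq : Y = fun ω => A ω * Y₁ ω + (1 - A ω) * Y₀ ω := funext hY
  have hYint : Integrable Y P := by
    rw [hYeq]
    exact (hY₁.bdd_mul hA.aestronglyMeasurable (Filter.Eventually.of_forall hAbd)).add
      (hY₀.bdd_mul (measurable_const.sub hA).aestronglyMeasurable (Filter.Eventually.of_forall h1Abd))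
  have hAint : Integrable A P :=
    (integrable_const (1:ℝ)).mono' hA.aestronglyMeasurable
      (Filter.Eventually.of_forall fun ω => by simpa using hAbd ω)
  have hAYint : Integrable (fun ω => A ω * Y ω) P :=
    hYint.bdd_mul hA.aestronglyMeasurable (Filter.Eventually.of_forall hAbd)
  have h1AYint : Integrable (fun ω => (1 - A ω) * Y ω) P :=
    hYint.bdd_mul (measurable_const.sub hA).aestronglyMeasurable (Filter.Eventually.of_forall h1Abd)
  have hY₁Aint : Integrable (fun ω => Y₁ ω * A ω) P :=
    (hY₁.bdd_mul hA.aestronglyMeasurable (Filter.Eventually.of_forall hAbd)).congr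
      (Filter.Eventually.of_forall fun ω => mul_comm _ _)
  have hY₀Aint : Integrable (fun ω => Y₀ ω * A ω) P :=
    (hY₀.bdd_mul hA.aestronglyMeasurable (Filter.Eventually.of_forall hAbd)).congr
      (Filter.Eventually.of_forall fun ω => mul_comm _ _)
  have hm₁Aint : Integrable (fun ω => m₁ (X ω) * A ω) P :=
    (hm₁int.bdd_mul hA.aestronglyMeasurable (Filter.Eventually.of_forall hAbd)).congr
      (Filter.Eventually.of_forall fun ω => mul_comm _ _)
  have hm₀1Aint : Integrable (fun ω => m₀ (X ω) * (1 - A ω)) P :=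
    (hm₀int.bdd_mul (measurable_const.sub hA).aestronglyMeasurable (Filter.Eventually.of_forall h1Abd)).congr
      (Filter.Eventually.of_forall fun ω => mul_comm _ _)
  -- pointwise identities from A ∈ {0,1}
  have hAY1 : ∀ ω, A ω * Y ω = Y₁ ω * A ω := by
    intro ω; rcases hA01 ω with h | h <;> rw [hY ω, h] <;> ring
  have h1AY0 : ∀ ω, (1 - A ω) * Y ω = Y₀ ω - Y₀ ω * A ω := by
    intro ω; rcases hA01 ω with h | h <;> rw [hY ω, h] <;> ring
  -- conditional independence of each potential outcome with A
  have hciY₁ : CondIndepFun m hm Y₁ A P := by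
    have h := Kernel.IndepFun.comp hignor measurable_fst measurable_id
    exact h
  have hciY₀ : CondIndepFun m hm Y₀ A P := by
    have h := Kernel.IndepFun.comp hignor measurable_snd measurable_id
    exact h
  have hfact₁ := aux_condexp_mul hm P hY₁m hA hY₁ hAint hY₁Aint hciY₁
  have hfact₀ := aux_condexp_mul hm P hY₀m hA hY₀ hAint hY₀Aint hciY₀
  -- identification: m₁(X) = E[Y₁|m], m₀(X) = E[Y₀|m] a.e.
  have key₁ : (fun ω => m₁ (X ω)) =ᵐ[P] P[Y₁|m] := by
    have h2 : P[fun ω => A ω * Y ω|m] =ᵐ[P] fun ω => (P[Y₁|m]) ω * (P[A|m]) ω := by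
      have h1 : (fun ω => A ω * Y ω) = fun ω => Y₁ ω * A ω := funext hAY1
      rw [h1]; exact hfact₁
    filter_upwards [hcorr₁, h2, hver, hpos] with ω ha hb hc hd
    have : m₁ (X ω) * e0 (X ω) = (P[Y₁|m]) ω * e0 (X ω) := by
      rw [ha, hb, hc]
    exact mul_right_cancel₀ (ne_of_gt (lt_of_lt_of_le hδ0 hd.1)) this
  have key₀ : (fun ω => m₀ (X ω)) =ᵐ[P] P[Y₀|m] := by
    have h2 : P[fun ω => (1 - A ω) * Y ω|m]
        =ᵐ[P] fun ω => (P[Y₀|m]) ω * (1 - (P[A|m]) ω) := by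
      have h1 : (fun ω => (1 - A ω) * Y ω) = fun ω => Y₀ ω - Y₀ ω * A ω := funext h1AY0
      rw [h1]
      have h3 : P[fun ω => Y₀ ω - Y₀ ω * A ω|m]
          =ᵐ[P] P[Y₀|m] - P[fun ω => Y₀ ω * A ω|m] := condExp_sub hY₀ hY₀Aint m
      filter_upwards [h3, hfact₀] with ω hω h4
      rw [hω]; simp only [Pi.sub_apply, h4]; ring
    filter_upwards [hcorr₀, h2, hver, hpos] with ω ha hb hc hd
    have h5 : m₀ (X ω) * (1 - e0 (X ω)) = (P[Y₀|m]) ω * (1 - e0 (X ω)) := by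
      rw [ha, hb, hc]
    have h6 : (0:ℝ) < 1 - e0 (X ω) := by linarith [hd.2]
    exact mul_right_cancel₀ (ne_of_gt h6) h5
  have hint₁ : ∫ ω, m₁ (X ω) ∂P = ∫ ω, Y₁ ω ∂P :=
    (integral_congr_ae key₁).trans (integral_condExp hm)
  have hint₀ : ∫ ω, m₀ (X ω) ∂P = ∫ ω, Y₀ ω ∂P :=
    (integral_congr_ae key₀).trans (integral_condExp hm)
  -- measurability w.r.t. m
  -- zero-mean corrections
  have hebd1 : ∀ ω, ‖(e (X ω))⁻¹‖ ≤ δ'⁻¹ := by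
    intro ω
    have h1 := (hebd (X ω)).1
    have h2 : (0:ℝ) < e (X ω) := lt_of_lt_of_le hδ'0 h1
    rw [Real.norm_eq_abs, abs_of_nonneg (inv_nonneg.mpr h2.le)]
    exact inv_anti₀ hδ'0 h1
  have hebd0 : ∀ ω, ‖(1 - e (X ω))⁻¹‖ ≤ δ'⁻¹ := by
    intro ω
    have h1 := (hebd (X ω)).2
    have h1' : δ' ≤ 1 - e (X ω) := by linarith
    have h2 : (0:ℝ) < 1 - e (X ω) := lt_of_lt_of_le hδ'0 h1'
    rw [Real.norm_eq_abs, abs_of_nonneg (inv_nonneg.mpr h2.le)]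
    exact inv_anti₀ hδ'0 h1'
  have hc₁ : ∫ ω, (A ω / e (X ω)) * (Y ω - m₁ (X ω)) ∂P = 0 := by
    set F : Ω → ℝ := fun ω => A ω * Y ω - m₁ (X ω) * A ω with hFdef
    have hFint : Integrable F P := hAYint.sub hm₁Aint
    have hg : StronglyMeasurable[m] (fun ω => (e (X ω))⁻¹) :=
      ((he.comp hXm).inv).stronglyMeasurable
    have hgF : Integrable (fun ω => (e (X ω))⁻¹ * F ω) P :=
      hFint.bdd_mul ((he.comp hX).inv).aestronglyMeasurable (Filter.Eventually.of_forall hebd1)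
    have hFcond : P[F|m] =ᵐ[P] fun _ => (0:ℝ) := by
      have h1 : P[F|m] =ᵐ[P] P[fun ω => A ω * Y ω|m] - P[fun ω => m₁ (X ω) * A ω|m] :=
        condExp_sub hAYint hm₁Aint m
      have h2 : P[fun ω => m₁ (X ω) * A ω|m] =ᵐ[P] (fun ω => m₁ (X ω)) * P[A|m] :=
        condExp_mul_of_stronglyMeasurable_left ((hm₁.comp hXm)).stronglyMeasurable hm₁Aint hAint
      filter_upwards [h1, h2, hcorr₁, hver] with ω e1 e2 e3 e4
      have : (P[fun ω => A ω * Y ω|m]) ω = m₁ (X ω) * e0 (X ω) := e3.symm ▸ rfl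
      rw [e1]
      simp only [Pi.sub_apply, Pi.mul_apply, e2, ← e3, ← e4]
      ring
    have heq : (fun ω => (A ω / e (X ω)) * (Y ω - m₁ (X ω)))
        = fun ω => (e (X ω))⁻¹ * F ω := by
      funext ω; rw [hFdef]; rw [div_eq_mul_inv]; ring
    rw [heq]
    have step1 : ∫ ω, (e (X ω))⁻¹ * F ω ∂P
        = ∫ ω, (P[fun ω => (e (X ω))⁻¹ * F ω|m]) ω ∂P := (integral_condExp hm).symm
    rw [step1]
    have step2 : P[fun ω => (e (X ω))⁻¹ * F ω|m]
        =ᵐ[P] fun ω => (e (X ω))⁻¹ * (P[F|m]) ω := by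
      have := condExp_mul_of_stronglyMeasurable_left hg hgF hFint
      filter_upwards [this] with ω hω
      exact hω
    have step3 : P[fun ω => (e (X ω))⁻¹ * F ω|m] =ᵐ[P] fun _ => (0:ℝ) := by
      filter_upwards [step2, hFcond] with ω h1 h2
      rw [h1, h2, mul_zero]
    rw [integral_congr_ae step3, integral_zero]
  have hc₀ : ∫ ω, ((1 - A ω) / (1 - e (X ω))) * (Y ω - m₀ (X ω)) ∂P = 0 := by
    set F : Ω → ℝ := fun ω => (1 - A ω) * Y ω - m₀ (X ω) * (1 - A ω) with hFdef
    have hFint : Integrable F P := h1AYint.sub hm₀1Aint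
    have hg : StronglyMeasurable[m] (fun ω => (1 - e (X ω))⁻¹) :=
      ((measurable_const.sub (he.comp hXm)).inv).stronglyMeasurable
    have hgF : Integrable (fun ω => (1 - e (X ω))⁻¹ * F ω) P :=
      hFint.bdd_mul ((measurable_const.sub (he.comp hX)).inv).aestronglyMeasurable
        (Filter.Eventually.of_forall hebd0)
    have h1Aint : Integrable (fun ω => 1 - A ω) P := (integrable_const (1:ℝ)).sub hAint
    have hcond1A : P[fun ω => 1 - A ω|m] =ᵐ[P] fun ω => 1 - (P[A|m]) ω := by
      have h1 : P[fun ω => 1 - A ω|m] =ᵐ[P] P[fun _ => (1:ℝ)|m] - P[A|m] :=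
        condExp_sub (integrable_const 1) hAint m
      have h2 : P[fun _ => (1:ℝ)|m] = fun _ => (1:ℝ) := condExp_const hm 1
      filter_upwards [h1] with ω hω
      rw [hω]; simp [h2]
    have hFcond : P[F|m] =ᵐ[P] fun _ => (0:ℝ) := by
      have h1 : P[F|m] =ᵐ[P] P[fun ω => (1 - A ω) * Y ω|m]
          - P[fun ω => m₀ (X ω) * (1 - A ω)|m] := condExp_sub h1AYint hm₀1Aint m
      have h2 : P[fun ω => m₀ (X ω) * (1 - A ω)|m]
          =ᵐ[P] (fun ω => m₀ (X ω)) * P[fun ω => 1 - A ω|m] :=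
        condExp_mul_of_stronglyMeasurable_left ((hm₀.comp hXm)).stronglyMeasurable hm₀1Aint h1Aint
      filter_upwards [h1, h2, hcorr₀, hver, hcond1A] with ω e1 e2 e3 e4 e5
      rw [e1]
      simp only [Pi.sub_apply, Pi.mul_apply, e2, ← e3, e5, ← e4]
      ring
    have heq : (fun ω => ((1 - A ω) / (1 - e (X ω))) * (Y ω - m₀ (X ω)))
        = fun ω => (1 - e (X ω))⁻¹ * F ω := by
      funext ω; rw [hFdef]; rw [div_eq_mul_inv]; ring
    rw [heq]
    have step1 : ∫ ω, (1 - e (X ω))⁻¹ * F ω ∂P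
        = ∫ ω, (P[fun ω => (1 - e (X ω))⁻¹ * F ω|m]) ω ∂P := (integral_condExp hm).symm
    rw [step1]
    have step3 : P[fun ω => (1 - e (X ω))⁻¹ * F ω|m] =ᵐ[P] fun _ => (0:ℝ) := by
      have step2 := condExp_mul_of_stronglyMeasurable_left hg hgF hFint
      filter_upwards [step2, hFcond] with ω h1 h2
      have h1' : (P[fun ω => (1 - e (X ω))⁻¹ * F ω|m]) ω
          = (1 - e (X ω))⁻¹ * (P[F|m]) ω := h1
      rw [h1', h2, mul_zero]
    rw [integral_congr_ae step3, integral_zero]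
  -- integrability of correction terms
  have hc₁int : Integrable (fun ω => (A ω / e (X ω)) * (Y ω - m₁ (X ω))) P := by
    have : (fun ω => (A ω / e (X ω)) * (Y ω - m₁ (X ω)))
        = fun ω => (A ω * (e (X ω))⁻¹) * (Y ω - m₁ (X ω)) := by
      funext ω; rw [div_eq_mul_inv]
    rw [this]
    refine (hYint.sub hm₁int).bdd_mul (hA.mul (he.comp hX).inv).aestronglyMeasurable
      (c := δ'⁻¹) (Filter.Eventually.of_forall fun ω => ?_)
    calc ‖A ω * (e (X ω))⁻¹‖ = ‖A ω‖ * ‖(e (X ω))⁻¹‖ := norm_mul _ _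
    _ ≤ 1 * δ'⁻¹ := mul_le_mul (hAbd ω) (hebd1 ω) (norm_nonneg _) zero_le_one
    _ = δ'⁻¹ := one_mul _
  have hc₀int : Integrable (fun ω => ((1 - A ω) / (1 - e (X ω))) * (Y ω - m₀ (X ω))) P := by
    have : (fun ω => ((1 - A ω) / (1 - e (X ω))) * (Y ω - m₀ (X ω)))
        = fun ω => ((1 - A ω) * (1 - e (X ω))⁻¹) * (Y ω - m₀ (X ω)) := by
      funext ω; rw [div_eq_mul_inv]
    rw [this]
    refine (hYint.sub hm₀int).bdd_mul
      ((measurable_const.sub hA).mul (measurable_const.sub (he.comp hX)).inv).aestronglyMeasurable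
      (c := δ'⁻¹) (Filter.Eventually.of_forall fun ω => ?_)
    calc ‖(1 - A ω) * (1 - e (X ω))⁻¹‖ = ‖1 - A ω‖ * ‖(1 - e (X ω))⁻¹‖ := norm_mul _ _
    _ ≤ 1 * δ'⁻¹ := mul_le_mul (h1Abd ω) (hebd0 ω) (norm_nonneg _) zero_le_one
    _ = δ'⁻¹ := one_mul _
  -- assemble
  have e1 : ∫ ω, (m₁ (X ω) - m₀ (X ω)
        + (A ω / e (X ω)) * (Y ω - m₁ (X ω))
        - ((1 - A ω) / (1 - e (X ω))) * (Y ω - m₀ (X ω))) ∂P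
      = ∫ ω, (m₁ (X ω) - m₀ (X ω) + (A ω / e (X ω)) * (Y ω - m₁ (X ω))) ∂P
        - ∫ ω, ((1 - A ω) / (1 - e (X ω))) * (Y ω - m₀ (X ω)) ∂P :=
    integral_sub ((hm₁int.sub hm₀int).add hc₁int) hc₀int
  have e2 : ∫ ω, (m₁ (X ω) - m₀ (X ω) + (A ω / e (X ω)) * (Y ω - m₁ (X ω))) ∂P
      = ∫ ω, (m₁ (X ω) - m₀ (X ω)) ∂P
        + ∫ ω, (A ω / e (X ω)) * (Y ω - m₁ (X ω)) ∂P :=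
    integral_add (hm₁int.sub hm₀int) hc₁int
  have e3 : ∫ ω, (m₁ (X ω) - m₀ (X ω)) ∂P = ∫ ω, m₁ (X ω) ∂P - ∫ ω, m₀ (X ω) ∂P :=
    integral_sub hm₁int hm₀int
  have e4 : ∫ ω, (Y₁ ω - Y₀ ω) ∂P = ∫ ω, Y₁ ω ∂P - ∫ ω, Y₀ ω ∂P :=
    integral_sub hY₁ hY₀
  rw [e1, e2, e3, hc₁, hc₀, hint₁, hint₀, hτ, e4]
  ring

/-- Double robustness of the AIPW functional, outcome-model-correct half:
under strong ignorability and positivity, with correctly specified outcome regressions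
`m₁, m₀` (`E[A·Y | σ(X)] = m₁(X)·e⁰(X)` and `E[(1−A)·Y | σ(X)] = m₀(X)·(1−e⁰(X))` a.s.)
and an arbitrary measurable propensity model `e : 𝒳 → [δ′, 1−δ′]`,
`E[ m₁(X) − m₀(X) + (A/e(X))·(Y − m₁(X)) − ((1−A)/(1−e(X)))·(Y − m₀(X)) ] = E[Y₁ − Y₀] = τ`. -/
theorem stmt6 {Ω 𝓧 : Type*} [MeasurableSpace Ω] [StandardBorelSpace Ω] [MeasurableSpace 𝓧]
    (P : Measure Ω) [IsProbabilityMeasure P]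
    (A : Ω → ℝ) (X : Ω → 𝓧) (Y₁ Y₀ Y : Ω → ℝ)
    (hA : Measurable A) (hA01 : ∀ ω, A ω = 0 ∨ A ω = 1) (hX : Measurable X)
    (hY₁ : Integrable Y₁ P) (hY₀ : Integrable Y₀ P)
    (hYmeas : Measurable Y₁ ∧ Measurable Y₀)
    (hY : ∀ ω, Y ω = A ω * Y₁ ω + (1 - A ω) * Y₀ ω)
    (hignor : CondIndepFun (MeasurableSpace.comap X inferInstance) hX.comap_le
      (fun ω => (Y₁ ω, Y₀ ω)) A P)
    (e0 : 𝓧 → ℝ) (he0 : Measurable e0)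
    (hver : (fun ω => e0 (X ω)) =ᵐ[P] P[A | MeasurableSpace.comap X inferInstance])
    (δ : ℝ) (hδ : δ ∈ Set.Ioo (0 : ℝ) (1 / 2))
    (hpos : ∀ᵐ ω ∂P, e0 (X ω) ∈ Set.Icc δ (1 - δ))
    (m₁ m₀ : 𝓧 → ℝ) (hm₁ : Measurable m₁) (hm₀ : Measurable m₀)
    (hm₁int : Integrable (fun ω => m₁ (X ω)) P)
    (hm₀int : Integrable (fun ω => m₀ (X ω)) P)
    (hcorr₁ : (fun ω => m₁ (X ω) * e0 (X ω))
      =ᵐ[P] P[fun ω => A ω * Y ω | MeasurableSpace.comap X inferInstance])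
    (hcorr₀ : (fun ω => m₀ (X ω) * (1 - e0 (X ω)))
      =ᵐ[P] P[fun ω => (1 - A ω) * Y ω | MeasurableSpace.comap X inferInstance])
    (δ' : ℝ) (hδ' : δ' ∈ Set.Ioo (0 : ℝ) (1 / 2))
    (e : 𝓧 → ℝ) (he : Measurable e) (hebd : ∀ x, e x ∈ Set.Icc δ' (1 - δ'))
    (τ : ℝ) (hτ : τ = ∫ ω, (Y₁ ω - Y₀ ω) ∂P) :
    ∫ ω, (m₁ (X ω) - m₀ (X ω)
        + (A ω / e (X ω)) * (Y ω - m₁ (X ω))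
        - ((1 - A ω) / (1 - e (X ω))) * (Y ω - m₀ (X ω))) ∂P = τ :=
  stmt6_aux hX.comap_le P A X Y₁ Y₀ Y hA hA01 hX (fun s hs => ⟨s, hs, rfl⟩)
    hY₁ hY₀ hYmeas hY hignor e0 he0 hver δ hδ hpos m₁ m₀ hm₁ hm₀ hm₁int hm₀int
    hcorr₁ hcorr₀ δ' hδ' e he hebd τ hτ
end

section
/- Let P be a probability measure on a measurable space Θ and let B : Θ → ℝ be a bounded measurable function with P(B > 0) > 0 and P(B < 0) > 0. Then the function φ(λ) = ∫ B·exp(λ·B) dP is continuous and strictly increasing on ℝ, φ(λ) → +∞ as λ → +∞, φ(λ) → −∞ as λ → −∞, and there exists a unique λ* ∈ ℝ with φ(λ*) = 0; equivalently, the entropically tilted distribution with density proportional to exp(λ*·B) relative to P satisfies the moment constraint that the tilted mean of B equals 0, and λ* is the unique such tilting parameter. -/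
open MeasureTheory Filter

lemma stmt8_integrable {Θ : Type*} [MeasurableSpace Θ] (P : Measure Θ) [IsProbabilityMeasure P]
    {f : Θ → ℝ} (hf : Measurable f) {C : ℝ} (h : ∀ θ, |f θ| ≤ C) : Integrable f P :=
  ⟨hf.aestronglyMeasurable, HasFiniteIntegral.of_bounded (ae_of_all _ fun θ => by
    simpa [Real.norm_eq_abs] using h θ)⟩

lemma stmt8_intB {Θ : Type*} [MeasurableSpace Θ] (P : Measure Θ) [IsProbabilityMeasure P]
    {B : Θ → ℝ} (hBmeas : Measurable B) {M : ℝ} (hM : ∀ θ, |B θ| ≤ M) (hM0 : 0 ≤ M)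
    (lam : ℝ) : Integrable (fun θ => B θ * Real.exp (lam * B θ)) P := by
  refine stmt8_integrable P (hBmeas.mul ((hBmeas.const_mul lam).exp))
    (C := M * Real.exp (|lam| * M)) (fun θ => ?_)
  rw [abs_mul, abs_of_pos (Real.exp_pos _)]
  refine mul_le_mul (hM θ) (Real.exp_le_exp.2 ?_) (Real.exp_pos _).le hM0
  calc lam * B θ ≤ |lam * B θ| := le_abs_self _
    _ = |lam| * |B θ| := abs_mul _ _
    _ ≤ |lam| * M := by exact mul_le_mul_of_nonneg_left (hM θ) (abs_nonneg _)

lemma stmt8_intExp {Θ : Type*} [MeasurableSpace Θ] (P : Measure Θ) [IsProbabilityMeasure P]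
    {B : Θ → ℝ} (hBmeas : Measurable B) {M : ℝ} (hM : ∀ θ, |B θ| ≤ M)
    (lam : ℝ) : Integrable (fun θ => Real.exp (lam * B θ)) P := by
  refine stmt8_integrable P ((hBmeas.const_mul lam).exp)
    (C := Real.exp (|lam| * M)) (fun θ => ?_)
  rw [abs_of_pos (Real.exp_pos _)]
  refine Real.exp_le_exp.2 ?_
  calc lam * B θ ≤ |lam * B θ| := le_abs_self _
    _ = |lam| * |B θ| := abs_mul _ _
    _ ≤ |lam| * M := mul_le_mul_of_nonneg_left (hM θ) (abs_nonneg _)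

lemma stmt8_tendsto_top {Θ : Type*} [MeasurableSpace Θ] (P : Measure Θ) [IsProbabilityMeasure P]
    {B : Θ → ℝ} (hBmeas : Measurable B) {M : ℝ} (hM : ∀ θ, |B θ| ≤ M) (hM0 : 0 ≤ M)
    (hpos : 0 < P {θ | 0 < B θ}) :
    Tendsto (fun lam => ∫ θ, B θ * Real.exp (lam * B θ) ∂P) atTop atTop := by
  -- find ε > 0 with P {B ≥ ε} > 0
  have hunion : {θ | 0 < B θ} = ⋃ n : ℕ, {θ | 1 / (n + 1) ≤ B θ} := by
    ext θ
    simp only [Set.mem_setOf_eq, Set.mem_iUnion]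
    constructor
    · intro h
      obtain ⟨n, hn⟩ := exists_nat_one_div_lt h
      exact ⟨n, hn.le⟩
    · rintro ⟨n, hn⟩
      exact lt_of_lt_of_le (by positivity) hn
  have hex : ∃ n : ℕ, P {θ | 1 / (n + 1 : ℝ) ≤ B θ} ≠ 0 := by
    by_contra h
    push_neg at h
    have : P {θ | 0 < B θ} = 0 := by
      rw [hunion]
      exact measure_iUnion_null h
    exact absurd this hpos.ne'
  obtain ⟨n, hn⟩ := hex
  set ε : ℝ := 1 / (n + 1 : ℝ) with hε
  have hε0 : 0 < ε := by positivity
  set s : Set Θ := {θ | ε ≤ B θ} with hs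
  have hsm : MeasurableSet s := hBmeas measurableSet_Ici
  have hc : 0 < (P s).toReal :=
    ENNReal.toReal_pos hn (measure_ne_top _ _)
  set c : ℝ := (P s).toReal with hcdef
  -- lower bound for λ ≥ 0
  have key : ∀ lam : ℝ, 0 ≤ lam →
      ε * Real.exp (lam * ε) * c - M ≤ ∫ θ, B θ * Real.exp (lam * B θ) ∂P := by
    intro lam hlam
    have hint := stmt8_intB P hBmeas hM hM0 lam
    rw [← integral_add_compl hsm hint]
    have h1 : ε * Real.exp (lam * ε) * c ≤ ∫ θ in s, B θ * Real.exp (lam * B θ) ∂P := by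
      have := setIntegral_ge_of_const_le (c := ε * Real.exp (lam * ε)) hsm
        (measure_ne_top _ _) (fun θ hθ => by
          have hB : ε ≤ B θ := hθ
          refine mul_le_mul hB (Real.exp_le_exp.2 ?_) (Real.exp_pos _).le
            (le_trans hε0.le hB)
          exact mul_le_mul_of_nonneg_left hB hlam) hint.integrableOn
      rw [smul_eq_mul, show P.real s = c from rfl] at this
      linarith [this]
    have h2 : -M ≤ ∫ θ in sᶜ, B θ * Real.exp (lam * B θ) ∂P := by
      have hb : ∀ θ, -M ≤ B θ * Real.exp (lam * B θ) := by
        intro θ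
        rcases le_or_gt 0 (B θ) with h | h
        · have : 0 ≤ B θ * Real.exp (lam * B θ) := mul_nonneg h (Real.exp_pos _).le
          linarith
        · have h1 : Real.exp (lam * B θ) ≤ 1 := by
            rw [← Real.exp_zero]
            exact Real.exp_le_exp.2 (mul_nonpos_of_nonneg_of_nonpos hlam h.le)
          have : B θ ≤ B θ * Real.exp (lam * B θ) := by nlinarith [Real.exp_pos (lam * B θ)]
          have hBM : -M ≤ B θ := neg_le_of_abs_le (hM θ)
          linarith
      have := setIntegral_ge_of_const_le (c := -M) hsm.compl (measure_ne_top _ _)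
        (fun θ _ => hb θ) hint.integrableOn
      have hle : (P sᶜ).toReal ≤ 1 := by
        rw [← ENNReal.toReal_one]
        exact ENNReal.toReal_mono (by simp) (prob_le_one)
      rw [smul_eq_mul, show P.real sᶜ = (P sᶜ).toReal from rfl] at this
      nlinarith [this]
    linarith
  have hlow : Tendsto (fun lam : ℝ => ε * Real.exp (lam * ε) * c - M) atTop atTop := by
    have h1 : Tendsto (fun lam : ℝ => lam * ε) atTop atTop :=
      Tendsto.atTop_mul_const hε0 tendsto_id
    have h2 : Tendsto (fun lam : ℝ => Real.exp (lam * ε)) atTop atTop :=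
      Real.tendsto_exp_atTop.comp h1
    have h3 : Tendsto (fun lam : ℝ => ε * Real.exp (lam * ε) * c) atTop atTop := by
      have := (h2.const_mul_atTop hε0).atTop_mul_const hc
      simpa [mul_comm, mul_assoc] using this
    exact h3.atTop_add tendsto_const_nhds
  refine tendsto_atTop_mono' atTop ?_ hlow
  filter_upwards [eventually_ge_atTop (0 : ℝ)] with lam hlam using key lam hlam

/-- Well-posedness of the entropic-tilting parameter equation. If `P` is a
probability measure and `B` is bounded measurable with `P(B > 0) > 0` and `P(B < 0) > 0`,
then `φ(λ) = ∫ B·exp(λ·B) dP` is continuous and strictly increasing, tends to `+∞` at `+∞`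
and to `−∞` at `−∞`, and has a unique zero `λ*`; moreover the tilted mean of `B` vanishes
at `λ` iff `φ(λ) = 0`, so `λ*` is the unique tilting parameter satisfying the moment
constraint. -/
theorem stmt8 {Θ : Type*} [MeasurableSpace Θ] (P : Measure Θ) [IsProbabilityMeasure P]
    (B : Θ → ℝ) (hBmeas : Measurable B) (hBbd : ∃ M : ℝ, ∀ θ, |B θ| ≤ M)
    (hpos : 0 < P {θ | 0 < B θ}) (hneg : 0 < P {θ | B θ < 0})
    (φ : ℝ → ℝ) (hφ : ∀ lam : ℝ, φ lam = ∫ θ, B θ * Real.exp (lam * B θ) ∂P) :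
    Continuous φ ∧ StrictMono φ ∧
    Tendsto φ atTop atTop ∧ Tendsto φ atBot atBot ∧
    (∃! lamStar : ℝ, φ lamStar = 0) ∧
    (∀ lam : ℝ,
      (∫ θ, B θ * Real.exp (lam * B θ) ∂P) / (∫ θ, Real.exp (lam * B θ) ∂P) = 0
        ↔ φ lam = 0) := by
  obtain ⟨M, hM⟩ := hBbd
  have hne : {θ | 0 < B θ}.Nonempty := by
    by_contra h
    rw [Set.not_nonempty_iff_eq_empty] at h
    rw [h] at hpos
    simp at hpos
  obtain ⟨θ₀, hθ₀⟩ := hne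
  have hM0 : 0 ≤ M := le_trans (abs_nonneg _) (hM θ₀)
  have hφfun : φ = fun lam => ∫ θ, B θ * Real.exp (lam * B θ) ∂P := funext hφ
  -- continuity
  have hcont : Continuous φ := by
    rw [hφfun, continuous_iff_continuousAt]
    intro lam₀
    refine continuousAt_of_dominated (bound := fun _ => M * Real.exp ((|lam₀| + 1) * M))
      ?_ ?_ (integrable_const _) ?_
    · filter_upwards with lam
      exact (hBmeas.mul ((hBmeas.const_mul lam).exp)).aestronglyMeasurable
    · filter_upwards [Metric.ball_mem_nhds lam₀ one_pos] with lam hlam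
      filter_upwards with θ
      rw [Real.norm_eq_abs, abs_mul, abs_of_pos (Real.exp_pos _)]
      have hlam' : |lam| ≤ |lam₀| + 1 := by
        have := mem_ball_iff_norm.1 hlam
        rw [Real.norm_eq_abs] at this
        calc |lam| = |lam - lam₀ + lam₀| := by ring_nf
          _ ≤ |lam - lam₀| + |lam₀| := abs_add_le _ _
          _ ≤ |lam₀| + 1 := by linarith
      refine mul_le_mul (hM θ) (Real.exp_le_exp.2 ?_) (Real.exp_pos _).le hM0
      calc lam * B θ ≤ |lam * B θ| := le_abs_self _
        _ = |lam| * |B θ| := abs_mul _ _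
        _ ≤ (|lam₀| + 1) * M :=
          mul_le_mul hlam' (hM θ) (abs_nonneg _) (by positivity)
    · filter_upwards with θ
      exact (continuous_const.mul ((continuous_id.mul continuous_const).rexp)).continuousAt
  -- strict monotonicity
  have hmono : StrictMono φ := by
    intro l₁ l₂ hl
    rw [hφ l₁, hφ l₂]
    have hint1 := stmt8_intB P hBmeas hM hM0 l₁
    have hint2 := stmt8_intB P hBmeas hM hM0 l₂
    rw [← sub_pos, ← integral_sub hint2 hint1]
    have heq : (fun θ => B θ * Real.exp (l₂ * B θ) - B θ * Real.exp (l₁ * B θ)) =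
        fun θ => B θ * (Real.exp (l₂ * B θ) - Real.exp (l₁ * B θ)) := by
      funext θ; ring
    rw [heq]
    have hnn : 0 ≤ fun θ => B θ * (Real.exp (l₂ * B θ) - Real.exp (l₁ * B θ)) := by
      intro θ
      rcases lt_trichotomy (B θ) 0 with h | h | h
      · have : Real.exp (l₂ * B θ) < Real.exp (l₁ * B θ) :=
          Real.exp_lt_exp.2 (by nlinarith)
        have := mul_pos_of_neg_of_neg h (by linarith : Real.exp (l₂ * B θ) - Real.exp (l₁ * B θ) < 0)
        exact this.le
      · simp [h]
      · have : Real.exp (l₁ * B θ) < Real.exp (l₂ * B θ) :=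
          Real.exp_lt_exp.2 (by nlinarith)
        exact (mul_pos h (by linarith)).le
    have hintg : Integrable (fun θ => B θ * (Real.exp (l₂ * B θ) - Real.exp (l₁ * B θ))) P :=
      (hint2.sub hint1).congr (ae_of_all _ fun θ => by simp only [Pi.sub_apply]; ring)
    rw [integral_pos_iff_support_of_nonneg hnn hintg]
    refine lt_of_lt_of_le hpos (measure_mono ?_)
    intro θ hθ
    have hB : 0 < B θ := hθ
    have : Real.exp (l₁ * B θ) < Real.exp (l₂ * B θ) :=
      Real.exp_lt_exp.2 (by nlinarith)
    exact (mul_pos hB (by linarith)).ne'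
  -- atTop
  have htop : Tendsto φ atTop atTop := by
    rw [hφfun]
    exact stmt8_tendsto_top P hBmeas hM hM0 hpos
  -- atBot, via -B
  have hbot : Tendsto φ atBot atBot := by
    have hM' : ∀ θ, |(-B) θ| ≤ M := fun θ => by simpa using hM θ
    have hpos' : 0 < P {θ | 0 < (-B) θ} := by
      have : {θ | 0 < (-B) θ} = {θ | B θ < 0} := by
        ext θ; simp [neg_pos]
      rw [this]; exact hneg
    have h := stmt8_tendsto_top P hBmeas.neg hM' hM0 hpos'
    have heq : (fun lam => ∫ θ, -B θ * Real.exp (lam * -B θ) ∂P) =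
        fun lam => -φ (-lam) := by
      funext lam
      rw [hφ (-lam), ← integral_neg]
      congr 1
      funext θ
      ring_nf
    simp only [Pi.neg_apply] at h
    rw [heq] at h
    have h2 : Tendsto (fun lam => φ (-lam)) atTop atBot :=
      tendsto_neg_atTop_iff.1 h
    have h3 : Tendsto (fun lam : ℝ => -lam) atBot atTop := tendsto_neg_atBot_atTop
    have h4 := h2.comp h3
    simp only [Function.comp_def, neg_neg] at h4
    exact h4
  -- existence and uniqueness of zero
  have hzero : ∃! lamStar : ℝ, φ lamStar = 0 := by
    obtain ⟨a, ha⟩ := (htop.eventually_ge_atTop 1).exists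
    obtain ⟨b, hb⟩ := (hbot.eventually_le_atBot (-1)).exists
    have hba : b ≤ a := by
      by_contra h
      push_neg at h
      have := hmono h
      linarith
    have h0 : (0 : ℝ) ∈ Set.Icc (φ b) (φ a) := ⟨by linarith, by linarith⟩
    obtain ⟨lamStar, _, hls⟩ := intermediate_value_Icc hba hcont.continuousOn h0
    exact ⟨lamStar, hls, fun y hy => hmono.injective (hy.trans hls.symm)⟩
  -- the iff
  refine ⟨hcont, hmono, htop, hbot, hzero, fun lam => ?_⟩
  have hden : 0 < ∫ θ, Real.exp (lam * B θ) ∂P := by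
    have hintE := stmt8_intExp P hBmeas hM lam
    have hbnd : ∀ θ, Real.exp (-(|lam| * M)) ≤ Real.exp (lam * B θ) := by
      intro θ
      refine Real.exp_le_exp.2 ?_
      have : |lam * B θ| ≤ |lam| * M := by
        rw [abs_mul]
        exact mul_le_mul_of_nonneg_left (hM θ) (abs_nonneg _)
      linarith [neg_abs_le (lam * B θ)]
    have := integral_mono (integrable_const _) hintE hbnd
    rw [integral_const] at this
    simp only [probReal_univ, one_smul] at this
    exact lt_of_lt_of_le (Real.exp_pos _) this
  rw [hφ lam, div_eq_zero_iff]
  constructor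
  · rintro (h | h)
    · exact h
    · exact absurd h hden.ne'
  · exact fun h => Or.inl h
end

section
/- Let (Θ, 𝒜, μ) be a measure space, and for each n ∈ ℕ let p_n : Θ → [0, ∞) be a measurable probability density with respect to μ (∫ p_n dμ = 1) and g_n : Θ → ℝ a measurable function. Assume: (i) there is M < ∞ with |g_n(θ)| ≤ M for all n and all θ ∈ Θ; (ii) there is a family of measurable sets (A_ε)_{ε>0} such that for each ε > 0, ∫_{Θ∖A_ε} p_n dμ → 0 as n → ∞; and (iii) for every η > 0 there exist ε > 0 and N ∈ ℕ such that sup_{θ ∈ A_ε} |g_n(θ)| ≤ η for all n ≥ N. Then ∫ |exp(g_n) − 1|·p_n dμ → 0 as n → ∞, and consequently, with z_n = ∫ exp(g_n)·p_n dμ (which satisfies z_n ≥ exp(−M) > 0), the total variation between the tilted density and the original density vanishes: ∫ | exp(g_n)·p_n / z_n − p_n | dμ → 0 as n → ∞. -/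
open MeasureTheory Filter

lemma stmt10_abs_exp_sub_one_le (x : ℝ) : |Real.exp x - 1| ≤ Real.exp |x| - 1 := by
  rcases le_or_gt 0 x with h | h
  · rw [abs_of_nonneg h, abs_of_nonneg (sub_nonneg.mpr (Real.one_le_exp h))]
  · rw [abs_of_neg h, abs_of_nonpos (sub_nonpos.mpr (Real.exp_le_one_iff.mpr h.le))]
    have h1 := Real.add_one_le_exp x
    have h2 := Real.add_one_le_exp (-x)
    linarith

/-- Analytic core of Lemma 1. If `p_n` are probability densities w.r.t. `μ`,
`g_n` are uniformly bounded measurable functions, the posterior mass escapes the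
complements of concentration sets `A_ε`, and `g_n` is eventually uniformly small on some
`A_ε`, then `∫ |exp(g_n) − 1|·p_n dμ → 0`; consequently, with the normalizing constant
`z_n = ∫ exp(g_n)·p_n dμ ≥ exp(−M) > 0`, the tilted density converges to the original in
total variation: `∫ |exp(g_n)·p_n/z_n − p_n| dμ → 0`. -/
theorem stmt10 {Θ : Type*} [MeasurableSpace Θ] (μ : Measure Θ)
    (p : ℕ → Θ → ℝ) (g : ℕ → Θ → ℝ)
    (hpmeas : ∀ n, Measurable (p n)) (hpnonneg : ∀ n θ, 0 ≤ p n θ)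
    (hpdens : ∀ n, ∫ θ, p n θ ∂μ = 1) (hpint : ∀ n, Integrable (p n) μ)
    (hgmeas : ∀ n, Measurable (g n))
    (M : ℝ) (hgbd : ∀ n θ, |g n θ| ≤ M)
    (A : ℝ → Set Θ) (hAmeas : ∀ ε > (0 : ℝ), MeasurableSet (A ε))
    (hconc : ∀ ε > (0 : ℝ),
      Tendsto (fun n => ∫ θ in (A ε)ᶜ, p n θ ∂μ) atTop (nhds 0))
    (hsmall : ∀ η > (0 : ℝ), ∃ ε > (0 : ℝ), ∃ N : ℕ, ∀ n ≥ N, ∀ θ ∈ A ε, |g n θ| ≤ η) :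
    Tendsto (fun n => ∫ θ, |Real.exp (g n θ) - 1| * p n θ ∂μ) atTop (nhds 0) ∧
    (∀ n, Real.exp (-M) ≤ ∫ θ, Real.exp (g n θ) * p n θ ∂μ) ∧
    Tendsto (fun n => ∫ θ,
        |Real.exp (g n θ) * p n θ / (∫ θ', Real.exp (g n θ') * p n θ' ∂μ) - p n θ| ∂μ)
      atTop (nhds 0) := by
  have hexpMpos : (0:ℝ) < Real.exp M := Real.exp_pos M
  -- pointwise bound |exp(g)-1| ≤ exp M
  have hptw : ∀ n θ, |Real.exp (g n θ) - 1| ≤ Real.exp M := by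
    intro n θ
    calc |Real.exp (g n θ) - 1| ≤ Real.exp |g n θ| - 1 := stmt10_abs_exp_sub_one_le _
      _ ≤ Real.exp M - 1 := by gcongr; exact hgbd n θ
      _ ≤ Real.exp M := by linarith
  -- integrability of exp(g)*p
  have hint1 : ∀ n, Integrable (fun θ => Real.exp (g n θ) * p n θ) μ := by
    intro n
    refine Integrable.mono' ((hpint n).const_mul (Real.exp M))
      (((hgmeas n).exp.mul (hpmeas n)).aestronglyMeasurable) ?_
    filter_upwards with θ
    rw [Real.norm_eq_abs, abs_mul, abs_of_nonneg (Real.exp_pos _).le,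
      abs_of_nonneg (hpnonneg n θ)]
    have : Real.exp (g n θ) ≤ Real.exp M :=
      Real.exp_le_exp.mpr ((abs_le.mp (hgbd n θ)).2)
    exact mul_le_mul_of_nonneg_right this (hpnonneg n θ)
  -- integrability of |exp(g)-1|*p
  have hint2 : ∀ n, Integrable (fun θ => |Real.exp (g n θ) - 1| * p n θ) μ := by
    intro n
    refine Integrable.mono' ((hpint n).const_mul (Real.exp M))
      ((((hgmeas n).exp.sub measurable_const).abs.mul (hpmeas n)).aestronglyMeasurable) ?_
    filter_upwards with θ
    rw [Real.norm_eq_abs, abs_mul, abs_abs, abs_of_nonneg (hpnonneg n θ)]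
    exact mul_le_mul_of_nonneg_right (hptw n θ) (hpnonneg n θ)
  set I : ℕ → ℝ := fun n => ∫ θ, |Real.exp (g n θ) - 1| * p n θ ∂μ with hI
  have hInonneg : ∀ n, 0 ≤ I n := fun n =>
    integral_nonneg fun θ => mul_nonneg (abs_nonneg _) (hpnonneg n θ)
  -- main convergence
  have hmain : Tendsto I atTop (nhds 0) := by
    rw [Metric.tendsto_atTop]
    intro δ hδ
    set η : ℝ := Real.log (1 + δ/2) with hη
    have hηpos : 0 < η := Real.log_pos (by linarith)
    obtain ⟨ε, hε, N₁, hN₁⟩ := hsmall η hηpos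
    have hδ' : 0 < δ / (2 * Real.exp M) := by positivity
    obtain ⟨N₂, hN₂⟩ := (Metric.tendsto_atTop.mp (hconc ε hε)) _ hδ'
    refine ⟨max N₁ N₂, fun n hn => ?_⟩
    have hn₁ : n ≥ N₁ := le_trans (le_max_left _ _) hn
    have hn₂ : n ≥ N₂ := le_trans (le_max_right _ _) hn
    have hAm := hAmeas ε hε
    rw [Real.dist_eq, sub_zero, abs_of_nonneg (hInonneg n)]
    have hsplit : I n = (∫ θ in A ε, |Real.exp (g n θ) - 1| * p n θ ∂μ)
        + ∫ θ in (A ε)ᶜ, |Real.exp (g n θ) - 1| * p n θ ∂μ :=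
      (integral_add_compl hAm (hint2 n)).symm
    have hb1 : (∫ θ in A ε, |Real.exp (g n θ) - 1| * p n θ ∂μ) ≤ δ/2 := by
      have h1 : (∫ θ in A ε, |Real.exp (g n θ) - 1| * p n θ ∂μ)
          ≤ ∫ θ in A ε, (δ/2) * p n θ ∂μ := by
        refine setIntegral_mono_on (hint2 n).integrableOn
          (((hpint n).const_mul _).integrableOn) hAm ?_
        intro θ hθ
        have hgs : |g n θ| ≤ η := hN₁ n hn₁ θ hθ
        have : |Real.exp (g n θ) - 1| ≤ Real.exp η - 1 := by
          calc |Real.exp (g n θ) - 1| ≤ Real.exp |g n θ| - 1 := stmt10_abs_exp_sub_one_le _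
            _ ≤ Real.exp η - 1 := by gcongr
        have hexpη : Real.exp η = 1 + δ/2 := Real.exp_log (by linarith)
        have hb : |Real.exp (g n θ) - 1| ≤ δ/2 := by rw [hexpη] at this; linarith
        exact mul_le_mul_of_nonneg_right hb (hpnonneg n θ)
      have h2 : (∫ θ in A ε, (δ/2) * p n θ ∂μ) = (δ/2) * ∫ θ in A ε, p n θ ∂μ :=
        integral_const_mul _ _
      have h3 : (∫ θ in A ε, p n θ ∂μ) ≤ 1 := by
        rw [← hpdens n]
        exact setIntegral_le_integral (hpint n)
          (Filter.Eventually.of_forall fun θ => hpnonneg n θ)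
      calc (∫ θ in A ε, |Real.exp (g n θ) - 1| * p n θ ∂μ)
          ≤ (δ/2) * ∫ θ in A ε, p n θ ∂μ := by rw [← h2]; exact h1
        _ ≤ (δ/2) * 1 := by
            apply mul_le_mul_of_nonneg_left h3 (by linarith)
        _ = δ/2 := mul_one _
    have hb2 : (∫ θ in (A ε)ᶜ, |Real.exp (g n θ) - 1| * p n θ ∂μ) < δ/2 := by
      have h1 : (∫ θ in (A ε)ᶜ, |Real.exp (g n θ) - 1| * p n θ ∂μ)
          ≤ ∫ θ in (A ε)ᶜ, Real.exp M * p n θ ∂μ := by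
        refine setIntegral_mono_on (hint2 n).integrableOn
          (((hpint n).const_mul _).integrableOn) hAm.compl ?_
        intro θ _
        exact mul_le_mul_of_nonneg_right (hptw n θ) (hpnonneg n θ)
      have h2 : (∫ θ in (A ε)ᶜ, Real.exp M * p n θ ∂μ)
          = Real.exp M * ∫ θ in (A ε)ᶜ, p n θ ∂μ := integral_const_mul _ _
      have h3 : (∫ θ in (A ε)ᶜ, p n θ ∂μ) < δ / (2 * Real.exp M) := by
        have := hN₂ n hn₂
        rw [Real.dist_eq, sub_zero] at this
        exact lt_of_le_of_lt (le_abs_self _) this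
      calc (∫ θ in (A ε)ᶜ, |Real.exp (g n θ) - 1| * p n θ ∂μ)
          ≤ Real.exp M * ∫ θ in (A ε)ᶜ, p n θ ∂μ := by rw [← h2]; exact h1
        _ < Real.exp M * (δ / (2 * Real.exp M)) := by
            exact mul_lt_mul_of_pos_left h3 hexpMpos
        _ = δ/2 := by field_simp
    linarith [hsplit ▸ (add_lt_add_of_le_of_lt hb1 hb2)]
  -- z bound
  have hz : ∀ n, Real.exp (-M) ≤ ∫ θ, Real.exp (g n θ) * p n θ ∂μ := by
    intro n
    have : (∫ θ, Real.exp (-M) * p n θ ∂μ) ≤ ∫ θ, Real.exp (g n θ) * p n θ ∂μ := by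
      refine integral_mono ((hpint n).const_mul _) (hint1 n) fun θ => ?_
      have : Real.exp (-M) ≤ Real.exp (g n θ) :=
        Real.exp_le_exp.mpr (abs_le.mp (hgbd n θ)).1
      exact mul_le_mul_of_nonneg_right this (hpnonneg n θ)
    rwa [integral_const_mul, hpdens n, mul_one] at this
  refine ⟨hmain, hz, ?_⟩
  -- total variation part via squeeze
  set z : ℕ → ℝ := fun n => ∫ θ, Real.exp (g n θ) * p n θ ∂μ with hzdef
  have hzpos : ∀ n, 0 < z n := fun n => lt_of_lt_of_le (Real.exp_pos _) (hz n)
  have hzinv : ∀ n, 1 / z n ≤ Real.exp M := by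
    intro n
    rw [div_le_iff₀ (hzpos n)]
    calc (1:ℝ) = Real.exp M * Real.exp (-M) := by
          rw [← Real.exp_add]; simp
      _ ≤ Real.exp M * z n := by gcongr; exact hz n
  have h1z : ∀ n, |1 - z n| ≤ I n := by
    intro n
    have heq : 1 - z n = ∫ θ, (1 - Real.exp (g n θ)) * p n θ ∂μ := by
      rw [show (fun θ => (1 - Real.exp (g n θ)) * p n θ)
            = fun θ => p n θ - Real.exp (g n θ) * p n θ from funext fun θ => by ring,
        integral_sub (hpint n) (hint1 n), hpdens n]
    rw [heq]
    calc |∫ θ, (1 - Real.exp (g n θ)) * p n θ ∂μ|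
        ≤ ∫ θ, |1 - Real.exp (g n θ)| * |p n θ| ∂μ := by
          simpa [Real.norm_eq_abs, abs_mul] using
            norm_integral_le_integral_norm (fun θ => (1 - Real.exp (g n θ)) * p n θ) (μ := μ)
      _ = I n := by
          congr 1; funext θ
          rw [abs_of_nonneg (hpnonneg n θ), abs_sub_comm]
  refine squeeze_zero (fun n => integral_nonneg fun θ => abs_nonneg _)
    (fun n => ?_) (by simpa using hmain.const_mul (2 * Real.exp M))
  -- bound J n ≤ 2 e^M * I n
  have hbnd : ∀ θ, |Real.exp (g n θ) * p n θ / z n - p n θ|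
      ≤ (1 / z n) * (|Real.exp (g n θ) - 1| * p n θ) + (|1 - z n| / z n) * p n θ := by
    intro θ
    have hzne : z n ≠ 0 := (hzpos n).ne'
    have heq : Real.exp (g n θ) * p n θ / z n - p n θ
        = ((Real.exp (g n θ) - 1) * p n θ + (1 - z n) * p n θ) / z n := by
      field_simp
      ring
    rw [heq, abs_div, abs_of_pos (hzpos n)]
    rw [div_le_iff₀ (hzpos n)]
    have habs : |(Real.exp (g n θ) - 1) * p n θ + (1 - z n) * p n θ|
        ≤ |Real.exp (g n θ) - 1| * p n θ + |1 - z n| * p n θ := by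
      calc _ ≤ |(Real.exp (g n θ) - 1) * p n θ| + |(1 - z n) * p n θ| := abs_add_le _ _
        _ = |Real.exp (g n θ) - 1| * p n θ + |1 - z n| * p n θ := by
            simp [abs_mul, abs_of_nonneg (hpnonneg n θ)]
    calc |(Real.exp (g n θ) - 1) * p n θ + (1 - z n) * p n θ|
        ≤ |Real.exp (g n θ) - 1| * p n θ + |1 - z n| * p n θ := habs
      _ = ((1 / z n) * (|Real.exp (g n θ) - 1| * p n θ)
            + (|1 - z n| / z n) * p n θ) * z n := by field_simp
  have hintb : Integrable (fun θ => (1 / z n) * (|Real.exp (g n θ) - 1| * p n θ)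
      + (|1 - z n| / z n) * p n θ) μ :=
    ((hint2 n).const_mul _).add ((hpint n).const_mul _)
  have hintJ : Integrable (fun θ => |Real.exp (g n θ) * p n θ / z n - p n θ|) μ :=
    (((hint1 n).div_const _).sub (hpint n)).abs
  calc (∫ θ, |Real.exp (g n θ) * p n θ / z n - p n θ| ∂μ)
      ≤ ∫ θ, (1 / z n) * (|Real.exp (g n θ) - 1| * p n θ)
          + (|1 - z n| / z n) * p n θ ∂μ :=
        integral_mono hintJ hintb hbnd
    _ = (1 / z n) * I n + (|1 - z n| / z n) * 1 := by
        rw [integral_add ((hint2 n).const_mul _) ((hpint n).const_mul _),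
          integral_const_mul, integral_const_mul, hpdens n]
    _ ≤ Real.exp M * I n + Real.exp M * I n := by
        rw [mul_one]
        gcongr
        · exact hInonneg n
        · exact hzinv n
        · rw [div_le_iff₀ (hzpos n)]
          calc |1 - z n| ≤ I n := h1z n
            _ = I n * 1 := (mul_one _).symm
            _ ≤ (Real.exp M * I n) * z n := by
                rw [mul_comm (Real.exp M) (I n), mul_assoc]
                apply mul_le_mul_of_nonneg_left _ (hInonneg n)
                calc (1:ℝ) = Real.exp M * Real.exp (-M) := by rw [← Real.exp_add]; simp
                  _ ≤ Real.exp M * z n := by gcongr; exact hz n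
    _ = 2 * Real.exp M * I n := by ring
end

section
/- Let A : Ω → {0,1}, X : Ω → 𝒳, and let Y₁, Y₀ : Ω → ℝ be integrable potential outcomes with observed outcome Y = A·Y₁ + (1−A)·Y₀. Let e(X) be a version of E[A | σ(X)] with δ ≤ e(X) ≤ 1−δ almost surely, δ ∈ (0, 1/2). For a ∈ {0,1}, let h_a^{(1)}, h_a^{(0)} : 𝒳 → ℝ be measurable and integrable with E[Y_a·A | σ(X)] = h_a^{(1)}(X)·e(X) and E[Y_a·(1−A) | σ(X)] = h_a^{(0)}(X)·(1 − e(X)) almost surely (versions of E[Y_a | A = 1, X] and E[Y_a | A = 0, X]), and set Δ_a(X) = h_a^{(1)}(X) − h_a^{(0)}(X). Then the observed regression contrast satisfies E[ h₁^{(1)}(X) − h₀^{(0)}(X) ] = E[Y₁ − Y₀] + E[ Δ₀(X)·e(X) + Δ₁(X)·(1 − e(X)) ]. In particular, if Δ₀(X) = Δ₁(X) = Δ almost surely for a constant Δ, then E[ h₁^{(1)}(X) − h₀^{(0)}(X) ] = E[Y₁ − Y₀] + Δ. -/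
open MeasureTheory ProbabilityTheory

/-- Sensitivity-analysis decomposition without ignorability. With
`h_a^{(1)}(X), h_a^{(0)}(X)` versions of `E[Y_a | A = 1, X]` and `E[Y_a | A = 0, X]`
(characterized by `E[Y_a·A | σ(X)] = h_a^{(1)}(X)·e(X)` and
`E[Y_a·(1−A) | σ(X)] = h_a^{(0)}(X)·(1−e(X))` a.s.) and `Δ_a = h_a^{(1)} − h_a^{(0)}`,
the observed regression contrast satisfies
`E[h₁^{(1)}(X) − h₀^{(0)}(X)] = E[Y₁ − Y₀] + E[Δ₀(X)·e(X) + Δ₁(X)·(1−e(X))]`;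
in particular, if `Δ₀(X) = Δ₁(X) = Δ` a.s. for a constant `Δ`, then
`E[h₁^{(1)}(X) − h₀^{(0)}(X)] = E[Y₁ − Y₀] + Δ`. -/
theorem stmt12 {Ω 𝓧 : Type*} [MeasurableSpace Ω] [MeasurableSpace 𝓧]
    (P : Measure Ω) [IsProbabilityMeasure P]
    (A : Ω → ℝ) (X : Ω → 𝓧) (Y₁ Y₀ Y : Ω → ℝ)
    (hA : Measurable A) (hA01 : ∀ ω, A ω = 0 ∨ A ω = 1) (hX : Measurable X)
    (hY₁ : Integrable Y₁ P) (hY₀ : Integrable Y₀ P)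
    (hYmeas : Measurable Y₁ ∧ Measurable Y₀)
    (hY : ∀ ω, Y ω = A ω * Y₁ ω + (1 - A ω) * Y₀ ω)
    (e : 𝓧 → ℝ) (he : Measurable e)
    (hver : (fun ω => e (X ω)) =ᵐ[P] P[A | MeasurableSpace.comap X inferInstance])
    (δ : ℝ) (hδ : δ ∈ Set.Ioo (0 : ℝ) (1 / 2))
    (hpos : ∀ᵐ ω ∂P, e (X ω) ∈ Set.Icc δ (1 - δ))
    (h11 h10 h01 h00 : 𝓧 → ℝ)
    (hmeas : Measurable h11 ∧ Measurable h10 ∧ Measurable h01 ∧ Measurable h00)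
    (hint : Integrable (fun ω => h11 (X ω)) P ∧ Integrable (fun ω => h10 (X ω)) P ∧
      Integrable (fun ω => h01 (X ω)) P ∧ Integrable (fun ω => h00 (X ω)) P)
    (h11ver : (fun ω => h11 (X ω) * e (X ω))
      =ᵐ[P] P[fun ω => Y₁ ω * A ω | MeasurableSpace.comap X inferInstance])
    (h10ver : (fun ω => h10 (X ω) * (1 - e (X ω)))
      =ᵐ[P] P[fun ω => Y₁ ω * (1 - A ω) | MeasurableSpace.comap X inferInstance])
    (h01ver : (fun ω => h01 (X ω) * e (X ω))
      =ᵐ[P] P[fun ω => Y₀ ω * A ω | MeasurableSpace.comap X inferInstance])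
    (h00ver : (fun ω => h00 (X ω) * (1 - e (X ω)))
      =ᵐ[P] P[fun ω => Y₀ ω * (1 - A ω) | MeasurableSpace.comap X inferInstance]) :
    (∫ ω, (h11 (X ω) - h00 (X ω)) ∂P
      = ∫ ω, (Y₁ ω - Y₀ ω) ∂P
        + ∫ ω, ((h01 (X ω) - h00 (X ω)) * e (X ω)
            + (h11 (X ω) - h10 (X ω)) * (1 - e (X ω))) ∂P) ∧
    (∀ Δ : ℝ,
      (∀ᵐ ω ∂P, h01 (X ω) - h00 (X ω) = Δ ∧ h11 (X ω) - h10 (X ω) = Δ) →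
      ∫ ω, (h11 (X ω) - h00 (X ω)) ∂P = (∫ ω, (Y₁ ω - Y₀ ω) ∂P) + Δ) := by
  have hm : MeasurableSpace.comap X inferInstance ≤ (inferInstance : MeasurableSpace Ω) :=
    hX.comap_le
  -- integrability of the condexp-version products
  have iA : Integrable (fun ω => h11 (X ω) * e (X ω)) P :=
    integrable_condExp.congr h11ver.symm
  have iB : Integrable (fun ω => h10 (X ω) * (1 - e (X ω))) P :=
    integrable_condExp.congr h10ver.symm
  have iC : Integrable (fun ω => h01 (X ω) * e (X ω)) P :=
    integrable_condExp.congr h01ver.symm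
  have iD : Integrable (fun ω => h00 (X ω) * (1 - e (X ω))) P :=
    integrable_condExp.congr h00ver.symm
  have iA' : Integrable (fun ω => h11 (X ω) * (1 - e (X ω))) P := by
    have := hint.1.sub iA
    exact this.congr (by filter_upwards with ω; (try simp only [Pi.sub_apply]); try ring)
  have iD' : Integrable (fun ω => h00 (X ω) * e (X ω)) P := by
    have := hint.2.2.2.sub iD
    exact this.congr (by filter_upwards with ω; (try simp only [Pi.sub_apply]); try ring)
  -- integrability of Y_a · A pieces
  have hAbd : ∀ ω, ‖A ω‖ ≤ 1 := by
    intro ω; rcases hA01 ω with h | h <;> simp [h]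
  have iY1A : Integrable (fun ω => Y₁ ω * A ω) P := by
    have := hY₁.bdd_mul hA.aestronglyMeasurable (c := 1) (Filter.Eventually.of_forall hAbd)
    exact this.congr (by filter_upwards with ω; (try simp only [Pi.sub_apply]); try ring)
  have iY0A : Integrable (fun ω => Y₀ ω * A ω) P := by
    have := hY₀.bdd_mul hA.aestronglyMeasurable (c := 1) (Filter.Eventually.of_forall hAbd)
    exact this.congr (by filter_upwards with ω; (try simp only [Pi.sub_apply]); try ring)
  have iY1A' : Integrable (fun ω => Y₁ ω * (1 - A ω)) P := by
    have := hY₁.sub iY1A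
    exact this.congr (by filter_upwards with ω; (try simp only [Pi.sub_apply]); try ring)
  have iY0A' : Integrable (fun ω => Y₀ ω * (1 - A ω)) P := by
    have := hY₀.sub iY0A
    exact this.congr (by filter_upwards with ω; (try simp only [Pi.sub_apply]); try ring)
  -- key integral identities
  have eA : ∫ ω, h11 (X ω) * e (X ω) ∂P = ∫ ω, Y₁ ω * A ω ∂P := by
    rw [integral_congr_ae h11ver, integral_condExp hm]
  have eB : ∫ ω, h10 (X ω) * (1 - e (X ω)) ∂P = ∫ ω, Y₁ ω * (1 - A ω) ∂P := by
    rw [integral_congr_ae h10ver, integral_condExp hm]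
  have eC : ∫ ω, h01 (X ω) * e (X ω) ∂P = ∫ ω, Y₀ ω * A ω ∂P := by
    rw [integral_congr_ae h01ver, integral_condExp hm]
  have eD : ∫ ω, h00 (X ω) * (1 - e (X ω)) ∂P = ∫ ω, Y₀ ω * (1 - A ω) ∂P := by
    rw [integral_congr_ae h00ver, integral_condExp hm]
  have eY1 : ∫ ω, Y₁ ω ∂P = ∫ ω, Y₁ ω * A ω ∂P + ∫ ω, Y₁ ω * (1 - A ω) ∂P := by
    rw [← integral_add iY1A iY1A']
    exact integral_congr_ae (by filter_upwards with ω; (try simp only [Pi.sub_apply]); try ring)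
  have eY0 : ∫ ω, Y₀ ω ∂P = ∫ ω, Y₀ ω * A ω ∂P + ∫ ω, Y₀ ω * (1 - A ω) ∂P := by
    rw [← integral_add iY0A iY0A']
    exact integral_congr_ae (by filter_upwards with ω; (try simp only [Pi.sub_apply]); try ring)
  have eH11 : ∫ ω, h11 (X ω) ∂P
      = ∫ ω, h11 (X ω) * e (X ω) ∂P + ∫ ω, h11 (X ω) * (1 - e (X ω)) ∂P := by
    rw [← integral_add iA iA']
    exact integral_congr_ae (by filter_upwards with ω; (try simp only [Pi.sub_apply]); try ring)
  have eH00 : ∫ ω, h00 (X ω) ∂P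
      = ∫ ω, h00 (X ω) * e (X ω) ∂P + ∫ ω, h00 (X ω) * (1 - e (X ω)) ∂P := by
    rw [← integral_add iD' iD]
    exact integral_congr_ae (by filter_upwards with ω; (try simp only [Pi.sub_apply]); try ring)
  have eXi : ∫ ω, ((h01 (X ω) - h00 (X ω)) * e (X ω)
        + (h11 (X ω) - h10 (X ω)) * (1 - e (X ω))) ∂P
      = (∫ ω, h01 (X ω) * e (X ω) ∂P - ∫ ω, h00 (X ω) * e (X ω) ∂P)
        + (∫ ω, h11 (X ω) * (1 - e (X ω)) ∂P - ∫ ω, h10 (X ω) * (1 - e (X ω)) ∂P) := by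
    rw [← integral_sub iC iD', ← integral_sub iA' iB, ← integral_add
      ((iC.sub iD').congr (by filter_upwards with ω; (try simp only [Pi.sub_apply]); try ring))
      ((iA'.sub iB).congr (by filter_upwards with ω; (try simp only [Pi.sub_apply]); try ring))]
    exact integral_congr_ae (by filter_upwards with ω; (try simp only [Pi.sub_apply]); try ring)
  have eDiff : ∫ ω, (h11 (X ω) - h00 (X ω)) ∂P
      = ∫ ω, h11 (X ω) ∂P - ∫ ω, h00 (X ω) ∂P := integral_sub hint.1 hint.2.2.2
  have eYdiff : ∫ ω, (Y₁ ω - Y₀ ω) ∂P = ∫ ω, Y₁ ω ∂P - ∫ ω, Y₀ ω ∂P :=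
    integral_sub hY₁ hY₀
  have main : ∫ ω, (h11 (X ω) - h00 (X ω)) ∂P
      = ∫ ω, (Y₁ ω - Y₀ ω) ∂P
        + ∫ ω, ((h01 (X ω) - h00 (X ω)) * e (X ω)
            + (h11 (X ω) - h10 (X ω)) * (1 - e (X ω))) ∂P := by
    rw [eDiff, eYdiff, eXi, eH11, eH00, eY1, eY0, eA, eB, eC, eD]
    ring
  refine ⟨main, fun Δ hΔ => ?_⟩
  have hconst : ∫ ω, ((h01 (X ω) - h00 (X ω)) * e (X ω)
      + (h11 (X ω) - h10 (X ω)) * (1 - e (X ω))) ∂P = Δ := by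
    have : ∫ ω, ((h01 (X ω) - h00 (X ω)) * e (X ω)
        + (h11 (X ω) - h10 (X ω)) * (1 - e (X ω))) ∂P = ∫ (_ : Ω), Δ ∂P := by
      refine integral_congr_ae ?_
      filter_upwards [hΔ] with ω hω
      rw [hω.1, hω.2]; ring
    simpa using this
  rw [main, hconst]
end

section
/- Let Θ be a compact metric space, Π a Borel probability measure on Θ, f : Θ → ℝ continuous, and f_n : Θ → ℝ measurable functions converging to f uniformly on Θ. Let f* = inf_{θ∈Θ} f(θ) and, for ε > 0, set A_ε = {θ ∈ Θ : f(θ) < f* + ε}. Assume Π(A_ε) > 0 for every ε > 0. Then for every ε > 0, the generalized posterior mass of A_ε tends to one: ( ∫_{A_ε} exp(−n·f_n(θ)) Π(dθ) ) / ( ∫_{Θ} exp(−n·f_n(θ)) Π(dθ) ) → 1 as n → ∞. -/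
open MeasureTheory Filter

/-- Posterior concentration for general posteriors (Proposition 1 / Miller
2021). On a compact metric space `Θ` with prior `Π`, if the measurable functions `f_n`
converge uniformly to a continuous `f` with infimum `f*`, and every set
`A_ε = {θ : f(θ) < f* + ε}` has positive prior mass, then for every `ε > 0` the general
posterior mass of `A_ε` tends to one:
`(∫_{A_ε} exp(−n·f_n) dΠ)/(∫_Θ exp(−n·f_n) dΠ) → 1`. -/
theorem stmt15 {Θ : Type*} [MetricSpace Θ] [CompactSpace Θ]
    [MeasurableSpace Θ] [BorelSpace Θ]
    (Pi : Measure Θ) [IsProbabilityMeasure Pi]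
    (f : Θ → ℝ) (hf : Continuous f)
    (fn : ℕ → Θ → ℝ) (hfnmeas : ∀ n, Measurable (fn n))
    (hunif : TendstoUniformly fn f atTop)
    (fstar : ℝ) (hfstar : fstar = ⨅ θ, f θ)
    (A : ℝ → Set Θ) (hA : ∀ ε : ℝ, A ε = {θ | f θ < fstar + ε})
    (hprior : ∀ ε > (0 : ℝ), 0 < Pi (A ε)) :
    ∀ ε > (0 : ℝ),
      Tendsto (fun n : ℕ =>
          (∫ θ in A ε, Real.exp (-(n : ℝ) * fn n θ) ∂Pi)
            / (∫ θ, Real.exp (-(n : ℝ) * fn n θ) ∂Pi))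
        atTop (nhds 1) := by
  intro ε hε
  -- Θ is nonempty
  have hΘ : Nonempty Θ := by
    by_contra h
    rw [not_nonempty_iff] at h
    have h1 := measure_univ (μ := Pi)
    rw [Set.univ_eq_empty_iff.mpr h] at h1
    simp at h1
  -- f attains its infimum
  obtain ⟨θmin, -, hθmin'⟩ :=
    isCompact_univ.exists_isMinOn (Set.univ_nonempty) hf.continuousOn
  have hθmin : ∀ θ ∈ Set.univ, f θmin ≤ f θ := fun θ hθ => hθmin' hθ
  have hfstar' : fstar = f θmin := by
    rw [hfstar]
    refine le_antisymm ?_ (le_ciInf fun θ => hθmin θ trivial)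
    exact ciInf_le ⟨f θmin, Set.forall_mem_range.2 fun θ => hθmin θ trivial⟩ θmin
  have hlb : ∀ θ, fstar ≤ f θ := fun θ => hfstar' ▸ hθmin θ trivial
  -- sets A δ are open, hence measurable
  have hopen : ∀ δ : ℝ, IsOpen (A δ) := by
    intro δ; rw [hA]; exact isOpen_lt hf continuous_const
  have hmeasA : ∀ δ : ℝ, MeasurableSet (A δ) := fun δ => (hopen δ).measurableSet
  -- positive prior mass of A (ε/2)
  set p : ℝ := (Pi (A (ε/2))).toReal with hp
  have hppos : 0 < p :=
    ENNReal.toReal_pos (hprior (ε/2) (by linarith)).ne' (measure_ne_top _ _)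
  set c : ℝ := ε/8 with hc
  have hcpos : 0 < c := by positivity
  -- uniform closeness eventually
  obtain ⟨N, hN⟩ := eventually_atTop.mp (Metric.tendstoUniformly_iff.mp hunif c hcpos)
  set g : ℕ → Θ → ℝ := fun n θ => Real.exp (-(n : ℝ) * fn n θ) with hg
  have hgmeas : ∀ n, Measurable (g n) := fun n =>
    Real.measurable_exp.comp ((hfnmeas n).const_mul (-(n : ℝ)))
  have hgpos : ∀ n θ, 0 < g n θ := fun n θ => Real.exp_pos _
  -- closeness facts for n ≥ N
  have hclose : ∀ n ≥ N, ∀ θ, |f θ - fn n θ| < c := by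
    intro n hn θ
    have := hN n hn θ
    rwa [Real.dist_eq] at this
  -- integrability for n ≥ N
  have hgint : ∀ n ≥ N, Integrable (g n) Pi := by
    intro n hn
    refine (integrable_const (Real.exp ((n : ℝ) * (c - fstar)))).mono'
      (hgmeas n).aestronglyMeasurable ?_
    filter_upwards with θ
    rw [Real.norm_eq_abs, abs_of_pos (hgpos n θ)]
    apply Real.exp_le_exp.2
    have h1 := hclose n hn θ
    have h2 := hlb θ
    have h3 : (0 : ℝ) ≤ (n : ℝ) := Nat.cast_nonneg n
    have h4 : fstar - c ≤ fn n θ := by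
      have := abs_lt.mp h1
      linarith [this.1, this.2]
    nlinarith
  -- lower bound on the denominator
  have hD : ∀ n ≥ N,
      Real.exp (-(n : ℝ) * (fstar + ε/2 + c)) * p ≤ ∫ θ, g n θ ∂Pi := by
    intro n hn
    have h1 : Real.exp (-(n : ℝ) * (fstar + ε/2 + c)) * p
        ≤ ∫ θ in A (ε/2), g n θ ∂Pi := by
      refine setIntegral_ge_of_const_le_real (hmeasA _) (measure_ne_top _ _) ?_
        ((hgint n hn).integrableOn)
      intro θ hθ
      apply Real.exp_le_exp.2
      have hfθ : f θ < fstar + ε/2 := by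
        have := hA (ε/2) ▸ hθ; exact this
      have h1 := abs_lt.mp (hclose n hn θ)
      have h3 : (0 : ℝ) ≤ (n : ℝ) := Nat.cast_nonneg n
      nlinarith [h1.1, h1.2]
    have h2 : ∫ θ in A (ε/2), g n θ ∂Pi ≤ ∫ θ, g n θ ∂Pi :=
      setIntegral_le_integral (hgint n hn) (ae_of_all _ fun θ => (hgpos n θ).le)
    linarith
  -- upper bound on the numerator over the complement
  have hNc : ∀ n ≥ N,
      ∫ θ in (A ε)ᶜ, g n θ ∂Pi ≤ Real.exp (-(n : ℝ) * (fstar + ε - c)) := by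
    intro n hn
    have hbd : ∀ θ ∈ (A ε)ᶜ, ‖g n θ‖ ≤ Real.exp (-(n : ℝ) * (fstar + ε - c)) := by
      intro θ hθ
      rw [Real.norm_eq_abs, abs_of_pos (hgpos n θ)]
      apply Real.exp_le_exp.2
      have hfθ : fstar + ε ≤ f θ := by
        have : θ ∉ {θ | f θ < fstar + ε} := by rw [← hA ε]; exact hθ
        simpa using not_lt.mp this
      have h1 := abs_lt.mp (hclose n hn θ)
      have h3 : (0 : ℝ) ≤ (n : ℝ) := Nat.cast_nonneg n
      nlinarith [h1.1, h1.2]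
    have h2 := norm_setIntegral_le_of_norm_le_const (measure_lt_top Pi _)
      hbd
    have h3 : (Pi (A ε)ᶜ).toReal ≤ 1 := by
      have := prob_le_one (μ := Pi) (s := (A ε)ᶜ)
      simpa using ENNReal.toReal_mono (by norm_num) this
    calc ∫ θ in (A ε)ᶜ, g n θ ∂Pi ≤ ‖∫ θ in (A ε)ᶜ, g n θ ∂Pi‖ := le_abs_self _
      _ ≤ Real.exp (-(n : ℝ) * (fstar + ε - c)) * (Pi (A ε)ᶜ).toReal := h2
      _ ≤ Real.exp (-(n : ℝ) * (fstar + ε - c)) * 1 := by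
          exact mul_le_mul_of_nonneg_left h3 (Real.exp_pos _).le
      _ = _ := mul_one _
  -- the complement ratio tends to 0
  set Q : ℕ → ℝ := fun n => (∫ θ in (A ε)ᶜ, g n θ ∂Pi) / (∫ θ, g n θ ∂Pi) with hQ
  have hQ0 : Tendsto Q atTop (nhds 0) := by
    have hbnd : Tendsto (fun n : ℕ => Real.exp (-(n : ℝ) * (ε/4)) / p) atTop (nhds 0) := by
      have h1 : Tendsto (fun n : ℕ => -(n : ℝ) * (ε/4)) atTop atBot := by
        have := (tendsto_natCast_atTop_atTop (R := ℝ)).atTop_mul_const_of_neg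
          (r := -(ε/4)) (by linarith)
        refine this.congr fun n => by ring
      have := (Real.tendsto_exp_atBot.comp h1).div_const p
      simpa using this
    refine squeeze_zero' (Eventually.of_forall fun n => ?_) ?_ hbnd
    · exact div_nonneg (setIntegral_nonneg (hmeasA ε).compl fun θ _ => (hgpos n θ).le)
        (integral_nonneg fun θ => (hgpos n θ).le)
    · filter_upwards [eventually_ge_atTop N] with n hn
      have hDpos : 0 < Real.exp (-(n : ℝ) * (fstar + ε/2 + c)) * p :=
        mul_pos (Real.exp_pos _) hppos
      have key : Real.exp (-(n : ℝ) * (fstar + ε - c))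
          / (Real.exp (-(n : ℝ) * (fstar + ε/2 + c)) * p)
          = Real.exp (-(n : ℝ) * (ε/4)) / p := by
        rw [div_mul_eq_div_div, ← Real.exp_sub]
        congr 2
        rw [hc]; ring
      calc Q n ≤ Real.exp (-(n : ℝ) * (fstar + ε - c))
            / (Real.exp (-(n : ℝ) * (fstar + ε/2 + c)) * p) := by
            refine div_le_div₀ (Real.exp_pos _).le (hNc n hn) hDpos (hD n hn)
        _ = _ := key
  -- rewrite the posterior mass as 1 - Q n eventually
  have hcongr : ∀ᶠ n in atTop, (1 : ℝ) - Q n =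
      (∫ θ in A ε, g n θ ∂Pi) / (∫ θ, g n θ ∂Pi) := by
    filter_upwards [eventually_ge_atTop N] with n hn
    have hsplit := integral_add_compl (hmeasA ε) (hgint n hn)
    have hDpos : 0 < ∫ θ, g n θ ∂Pi :=
      lt_of_lt_of_le (mul_pos (Real.exp_pos _) hppos) (hD n hn)
    have : (∫ θ in A ε, g n θ ∂Pi) = (∫ θ, g n θ ∂Pi) - ∫ θ in (A ε)ᶜ, g n θ ∂Pi := by
      linarith
    rw [this, sub_div, div_self hDpos.ne']
  have hfinal : Tendsto (fun n => (1 : ℝ) - Q n) atTop (nhds 1) := by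
    have := (tendsto_const_nhds (α := ℕ) (f := (atTop : Filter ℕ)) (x := (1:ℝ))).sub hQ0
    simpa using this
  exact (hfinal.congr' hcongr)
end

section
/- Let Θ_α ⊆ ℝ^p and Θ_β ⊆ ℝ^q be measurable sets, α* ∈ Θ_α, β⁰ ∈ Θ_β, and let μ_α, μ_β be σ-finite measures on Θ_α, Θ_β. For each n, let p_n^α and p_n^β be probability densities with respect to μ_α and μ_β, and let B_n : Θ_α × Θ_β → ℝ be measurable. Fix λ ∈ ℝ. Assume: (i) concentration: for every δ > 0, ∫_{‖α−α*‖ ≥ δ} p_n^α dμ_α → 0 and ∫_{‖β−β⁰‖ ≥ δ} p_n^β dμ_β → 0 as n → ∞; (ii) uniform boundedness: there is M < ∞ with |B_n(α,β)| ≤ M for all n, α, β; (iii) uniform Lipschitz continuity: there is L < ∞ with |B_n(α,β) − B_n(α′,β′)| ≤ L·(‖α−α′‖ + ‖β−β′‖) for all n and all points of Θ_α × Θ_β; and (iv) B_n(α*, β⁰) → 0 as n → ∞. Then, with z_n = ∬ exp(λ·B_n(α,β))·p_n^α(α)·p_n^β(β) dμ_α dμ_β (which satisfies z_n ≥ exp(−|λ|M)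 > 0), the entropically tilted posterior converges to the original posterior in total variation: ∬ | exp(λ·B_n(α,β))·p_n^α(α)·p_n^β(β)/z_n − p_n^α(α)·p_n^β(β) | dμ_α dμ_β → 0 as n → ∞. -/
open MeasureTheory Filter

lemma aux_abs_exp_sub_one_le (t : ℝ) : |Real.exp t - 1| ≤ |t| * Real.exp |t| := by
  rcases le_or_gt 0 t with h | h
  · rw [abs_of_nonneg h, abs_of_nonneg (by simpa using Real.one_le_exp h)]
    have h1 : (-t) + 1 ≤ Real.exp (-t) := Real.add_one_le_exp (-t)
    have h2 : Real.exp (-t) * Real.exp t = 1 := by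
      rw [← Real.exp_add]; simp
    nlinarith [Real.exp_pos t]
  · rw [abs_of_neg h, abs_of_nonpos (by simpa using Real.exp_le_one_iff.mpr h.le)]
    have h1 : t + 1 ≤ Real.exp t := Real.add_one_le_exp t
    have h2 : (1:ℝ) ≤ Real.exp (-t) := Real.one_le_exp (by linarith)
    nlinarith

/-- Deterministic, hypothesis-explicit form of Lemma 1. Let
`Θ_α ⊆ ℝ^p`, `Θ_β ⊆ ℝ^q` be measurable sets with σ-finite reference measures, `p_n^α,
p_n^β` probability densities concentrating at `α*` and `β⁰`, and `B_n` uniformly bounded,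
uniformly Lipschitz moment functions with `B_n(α*, β⁰) → 0`. Then, with
`z_n = ∬ exp(λ·B_n)·p_n^α·p_n^β ≥ exp(−|λ|·M) > 0`, the entropically tilted posterior
converges to the original posterior in total variation. -/
theorem stmt17 (pdim qdim : ℕ)
    (Θα : Set (EuclideanSpace ℝ (Fin pdim))) (Θβ : Set (EuclideanSpace ℝ (Fin qdim)))
    (hΘα : MeasurableSet Θα) (hΘβ : MeasurableSet Θβ)
    (αstar : EuclideanSpace ℝ (Fin pdim)) (hαstar : αstar ∈ Θα)
    (β0 : EuclideanSpace ℝ (Fin qdim)) (hβ0 : β0 ∈ Θβ)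
    (μα : Measure ↥Θα) (μβ : Measure ↥Θβ) [SigmaFinite μα] [SigmaFinite μβ]
    (pα : ℕ → ↥Θα → ℝ) (pβ : ℕ → ↥Θβ → ℝ)
    (hpαmeas : ∀ n, Measurable (pα n)) (hpαnonneg : ∀ n a, 0 ≤ pα n a)
    (hpαdens : ∀ n, ∫ a, pα n a ∂μα = 1) (hpαint : ∀ n, Integrable (pα n) μα)
    (hpβmeas : ∀ n, Measurable (pβ n)) (hpβnonneg : ∀ n b, 0 ≤ pβ n b)
    (hpβdens : ∀ n, ∫ b, pβ n b ∂μβ = 1) (hpβint : ∀ n, Integrable (pβ n) μβ)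
    (B : ℕ → ↥Θα → ↥Θβ → ℝ)
    (hBmeas : ∀ n, Measurable (fun x : ↥Θα × ↥Θβ => B n x.1 x.2))
    (lam : ℝ)
    (hconcα : ∀ δ > (0 : ℝ),
      Tendsto (fun n => ∫ a in {a : ↥Θα | δ ≤ ‖(a : EuclideanSpace ℝ (Fin pdim)) - αstar‖},
        pα n a ∂μα) atTop (nhds 0))
    (hconcβ : ∀ δ > (0 : ℝ),
      Tendsto (fun n => ∫ b in {b : ↥Θβ | δ ≤ ‖(b : EuclideanSpace ℝ (Fin qdim)) - β0‖},
        pβ n b ∂μβ) atTop (nhds 0))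
    (M : ℝ) (hBbd : ∀ n a b, |B n a b| ≤ M)
    (L : ℝ) (hBlip : ∀ n (a a' : ↥Θα) (b b' : ↥Θβ),
      |B n a b - B n a' b'|
        ≤ L * (‖(a : EuclideanSpace ℝ (Fin pdim)) - (a' : EuclideanSpace ℝ (Fin pdim))‖
            + ‖(b : EuclideanSpace ℝ (Fin qdim)) - (b' : EuclideanSpace ℝ (Fin qdim))‖))
    (hB0 : Tendsto (fun n => B n ⟨αstar, hαstar⟩ ⟨β0, hβ0⟩) atTop (nhds 0)) :
    (∀ n, Real.exp (-(|lam| * M))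
        ≤ ∫ x, Real.exp (lam * B n x.1 x.2) * (pα n x.1 * pβ n x.2) ∂(μα.prod μβ)) ∧
    Tendsto (fun n => ∫ x,
        |Real.exp (lam * B n x.1 x.2) * (pα n x.1 * pβ n x.2)
            / (∫ x', Real.exp (lam * B n x'.1 x'.2) * (pα n x'.1 * pβ n x'.2) ∂(μα.prod μβ))
          - pα n x.1 * pβ n x.2| ∂(μα.prod μβ))
      atTop (nhds 0) := by
  have hM0 : (0:ℝ) ≤ M := (abs_nonneg _).trans (hBbd 0 ⟨αstar, hαstar⟩ ⟨β0, hβ0⟩)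
  set C : ℝ := Real.exp (|lam| * M) with hCdef
  have hCpos : 0 < C := Real.exp_pos _
  have hC1 : (1:ℝ) ≤ C := Real.one_le_exp (by positivity)
  -- basic measurability / integrability
  have hpmeas : ∀ n, Measurable fun x : ↥Θα × ↥Θβ => pα n x.1 * pβ n x.2 :=
    fun n => ((hpαmeas n).comp measurable_fst).mul ((hpβmeas n).comp measurable_snd)
  have hpnonneg : ∀ n (x : ↥Θα × ↥Θβ), 0 ≤ pα n x.1 * pβ n x.2 :=
    fun n x => mul_nonneg (hpαnonneg n _) (hpβnonneg n _)
  have hpint : ∀ n, Integrable (fun x : ↥Θα × ↥Θβ => pα n x.1 * pβ n x.2) (μα.prod μβ) :=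
    fun n => (hpαint n).mul_prod (hpβint n)
  have hpone : ∀ n, ∫ x : ↥Θα × ↥Θβ, pα n x.1 * pβ n x.2 ∂(μα.prod μβ) = 1 := by
    intro n; rw [integral_prod_mul, hpαdens n, hpβdens n, one_mul]
  have habsB : ∀ n (x : ↥Θα × ↥Θβ), |lam * B n x.1 x.2| ≤ |lam| * M := by
    intro n x
    rw [abs_mul]
    exact mul_le_mul_of_nonneg_left (hBbd n x.1 x.2) (abs_nonneg lam)
  have hexp_bd : ∀ n (x : ↥Θα × ↥Θβ), Real.exp (lam * B n x.1 x.2) ≤ C := by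
    intro n x
    exact Real.exp_le_exp.mpr ((le_abs_self _).trans (habsB n x))
  have hexp_lb : ∀ n (x : ↥Θα × ↥Θβ),
      Real.exp (-(|lam| * M)) ≤ Real.exp (lam * B n x.1 x.2) := by
    intro n x
    exact Real.exp_le_exp.mpr (by linarith [neg_abs_le (lam * B n x.1 x.2), habsB n x])
  have hfmeas : ∀ n, Measurable fun x : ↥Θα × ↥Θβ =>
      Real.exp (lam * B n x.1 x.2) * (pα n x.1 * pβ n x.2) :=
    fun n => (Real.measurable_exp.comp ((hBmeas n).const_mul lam)).mul (hpmeas n)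
  have hfint : ∀ n, Integrable
      (fun x : ↥Θα × ↥Θβ => Real.exp (lam * B n x.1 x.2) * (pα n x.1 * pβ n x.2))
      (μα.prod μβ) := by
    intro n
    refine ((hpint n).const_mul C).mono' (hfmeas n).aestronglyMeasurable ?_
    filter_upwards with x
    rw [Real.norm_eq_abs, abs_of_nonneg (mul_nonneg (Real.exp_pos _).le (hpnonneg n x))]
    exact mul_le_mul_of_nonneg_right (hexp_bd n x) (hpnonneg n x)
  -- lower bound on z
  have hzlb : ∀ n, Real.exp (-(|lam| * M))
      ≤ ∫ x, Real.exp (lam * B n x.1 x.2) * (pα n x.1 * pβ n x.2) ∂(μα.prod μβ) := by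
    intro n
    have h0 : Real.exp (-(|lam| * M))
        = ∫ x : ↥Θα × ↥Θβ, Real.exp (-(|lam| * M)) * (pα n x.1 * pβ n x.2) ∂(μα.prod μβ) := by
      rw [integral_const_mul, hpone n, mul_one]
    rw [h0]
    exact integral_mono ((hpint n).const_mul _) (hfint n)
      (fun x => mul_le_mul_of_nonneg_right (hexp_lb n x) (hpnonneg n x))
  have hzpos : ∀ n, 0 < ∫ x, Real.exp (lam * B n x.1 x.2) * (pα n x.1 * pβ n x.2)
      ∂(μα.prod μβ) :=
    fun n => lt_of_lt_of_le (Real.exp_pos _) (hzlb n)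
  refine ⟨hzlb, ?_⟩
  -- H n := ∫ p |B|
  have hpBmeas : ∀ n, Measurable fun x : ↥Θα × ↥Θβ => pα n x.1 * pβ n x.2 * |B n x.1 x.2| :=
    fun n => (hpmeas n).mul (hBmeas n).abs
  have hpBint : ∀ n, Integrable
      (fun x : ↥Θα × ↥Θβ => pα n x.1 * pβ n x.2 * |B n x.1 x.2|) (μα.prod μβ) := by
    intro n
    refine ((hpint n).mul_const M).mono' (hpBmeas n).aestronglyMeasurable ?_
    filter_upwards with x
    rw [Real.norm_eq_abs, abs_of_nonneg (mul_nonneg (hpnonneg n x) (abs_nonneg _))]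
    exact mul_le_mul_of_nonneg_left (hBbd n x.1 x.2) (hpnonneg n x)
  have hHnonneg : ∀ n, 0 ≤ ∫ x, pα n x.1 * pβ n x.2 * |B n x.1 x.2| ∂(μα.prod μβ) :=
    fun n => integral_nonneg fun x => mul_nonneg (hpnonneg n x) (abs_nonneg _)
  -- convergence of H n to 0
  have hHtend : Tendsto
      (fun n => ∫ x, pα n x.1 * pβ n x.2 * |B n x.1 x.2| ∂(μα.prod μβ)) atTop (nhds 0) := by
    rw [Metric.tendsto_atTop]
    intro ε hε
    set L' : ℝ := max L 0 with hL'def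
    have hL'0 : (0:ℝ) ≤ L' := le_max_right _ _
    set δ : ℝ := ε / (4 * (L' + 1)) with hδdef
    have hδpos : 0 < δ := by positivity
    set Sα : Set ↥Θα := {a : ↥Θα | δ ≤ ‖(a : EuclideanSpace ℝ (Fin pdim)) - αstar‖} with hSαdef
    set Sβ : Set ↥Θβ := {b : ↥Θβ | δ ≤ ‖(b : EuclideanSpace ℝ (Fin qdim)) - β0‖} with hSβdef
    have hSαmeas : MeasurableSet Sα :=
      measurableSet_le measurable_const
        ((continuous_subtype_val.sub continuous_const).norm.measurable)
    have hSβmeas : MeasurableSet Sβ :=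
      measurableSet_le measurable_const
        ((continuous_subtype_val.sub continuous_const).norm.measurable)
    -- pointwise bound
    have hpt : ∀ n (x : ↥Θα × ↥Θβ),
        pα n x.1 * pβ n x.2 * |B n x.1 x.2|
          ≤ (|B n ⟨αstar, hαstar⟩ ⟨β0, hβ0⟩| + 2 * L' * δ) * (pα n x.1 * pβ n x.2)
            + M * (Sα.indicator (pα n) x.1 * pβ n x.2)
            + M * (pα n x.1 * Sβ.indicator (pβ n) x.2) := by
      intro n x
      have hc0 : 0 ≤ |B n ⟨αstar, hαstar⟩ ⟨β0, hβ0⟩| + 2 * L' * δ :=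
        add_nonneg (abs_nonneg _) (by positivity)
      have h1nn : 0 ≤ (|B n ⟨αstar, hαstar⟩ ⟨β0, hβ0⟩| + 2 * L' * δ) * (pα n x.1 * pβ n x.2) :=
        mul_nonneg hc0 (hpnonneg n x)
      have hαind : 0 ≤ Sα.indicator (pα n) x.1 :=
        Set.indicator_nonneg (fun a _ => hpαnonneg n a) _
      have hβind : 0 ≤ Sβ.indicator (pβ n) x.2 :=
        Set.indicator_nonneg (fun b _ => hpβnonneg n b) _
      have h2nn : 0 ≤ M * (Sα.indicator (pα n) x.1 * pβ n x.2) :=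
        mul_nonneg hM0 (mul_nonneg hαind (hpβnonneg n _))
      have h3nn : 0 ≤ M * (pα n x.1 * Sβ.indicator (pβ n) x.2) :=
        mul_nonneg hM0 (mul_nonneg (hpαnonneg n _) hβind)
      by_cases h1 : x.1 ∈ Sα
      · have hind : Sα.indicator (pα n) x.1 = pα n x.1 := Set.indicator_of_mem h1 _
        have hb : pα n x.1 * pβ n x.2 * |B n x.1 x.2| ≤ M * (pα n x.1 * pβ n x.2) := by
          rw [mul_comm (M) _]
          exact mul_le_mul_of_nonneg_left (hBbd n x.1 x.2) (hpnonneg n x)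
        rw [hind]
        linarith
      · by_cases h2 : x.2 ∈ Sβ
        · have hind : Sβ.indicator (pβ n) x.2 = pβ n x.2 := Set.indicator_of_mem h2 _
          have hb : pα n x.1 * pβ n x.2 * |B n x.1 x.2| ≤ M * (pα n x.1 * pβ n x.2) := by
            rw [mul_comm (M) _]
            exact mul_le_mul_of_nonneg_left (hBbd n x.1 x.2) (hpnonneg n x)
          rw [hind]
          linarith
        · have hd1 : ‖(x.1 : EuclideanSpace ℝ (Fin pdim)) - αstar‖ < δ := by
            simpa [hSαdef, Set.mem_setOf_eq, not_le] using h1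
          have hd2 : ‖(x.2 : EuclideanSpace ℝ (Fin qdim)) - β0‖ < δ := by
            simpa [hSβdef, Set.mem_setOf_eq, not_le] using h2
          have hlip := hBlip n x.1 ⟨αstar, hαstar⟩ x.2 ⟨β0, hβ0⟩
          have hLle : L * (‖(x.1 : EuclideanSpace ℝ (Fin pdim)) - αstar‖
              + ‖(x.2 : EuclideanSpace ℝ (Fin qdim)) - β0‖)
              ≤ L' * (‖(x.1 : EuclideanSpace ℝ (Fin pdim)) - αstar‖
                + ‖(x.2 : EuclideanSpace ℝ (Fin qdim)) - β0‖) :=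
            mul_le_mul_of_nonneg_right (le_max_left _ _)
              (add_nonneg (norm_nonneg _) (norm_nonneg _))
          have hsum : L' * (‖(x.1 : EuclideanSpace ℝ (Fin pdim)) - αstar‖
              + ‖(x.2 : EuclideanSpace ℝ (Fin qdim)) - β0‖) ≤ 2 * L' * δ := by
            have := mul_le_mul_of_nonneg_left (by linarith : ‖(x.1 : EuclideanSpace ℝ (Fin pdim)) - αstar‖
              + ‖(x.2 : EuclideanSpace ℝ (Fin qdim)) - β0‖ ≤ 2 * δ) hL'0
            linarith
          have htri : |B n x.1 x.2| ≤ |B n x.1 x.2 - B n ⟨αstar, hαstar⟩ ⟨β0, hβ0⟩|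
              + |B n ⟨αstar, hαstar⟩ ⟨β0, hβ0⟩| := by
            calc |B n x.1 x.2| = |(B n x.1 x.2 - B n ⟨αstar, hαstar⟩ ⟨β0, hβ0⟩)
                + B n ⟨αstar, hαstar⟩ ⟨β0, hβ0⟩| := by ring_nf
              _ ≤ _ := abs_add_le _ _
          have hkey : |B n x.1 x.2| ≤ |B n ⟨αstar, hαstar⟩ ⟨β0, hβ0⟩| + 2 * L' * δ := by
            linarith
          have hb : pα n x.1 * pβ n x.2 * |B n x.1 x.2|
              ≤ (|B n ⟨αstar, hαstar⟩ ⟨β0, hβ0⟩| + 2 * L' * δ) * (pα n x.1 * pβ n x.2) := by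
            rw [mul_comm (|B n ⟨αstar, hαstar⟩ ⟨β0, hβ0⟩| + 2 * L' * δ) _]
            exact mul_le_mul_of_nonneg_left hkey (hpnonneg n x)
          linarith
    -- integrated bound
    have hint_le : ∀ n, (∫ x, pα n x.1 * pβ n x.2 * |B n x.1 x.2| ∂(μα.prod μβ))
        ≤ (|B n ⟨αstar, hαstar⟩ ⟨β0, hβ0⟩| + 2 * L' * δ)
          + M * (∫ a in Sα, pα n a ∂μα) + M * (∫ b in Sβ, pβ n b ∂μβ) := by
      intro n
      have hindα : Integrable (Sα.indicator (pα n)) μα := (hpαint n).indicator hSαmeas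
      have hindβ : Integrable (Sβ.indicator (pβ n)) μβ := (hpβint n).indicator hSβmeas
      have hI1 : Integrable (fun x : ↥Θα × ↥Θβ =>
          (|B n ⟨αstar, hαstar⟩ ⟨β0, hβ0⟩| + 2 * L' * δ) * (pα n x.1 * pβ n x.2))
          (μα.prod μβ) := (hpint n).const_mul _
      have hI2 : Integrable (fun x : ↥Θα × ↥Θβ =>
          M * (Sα.indicator (pα n) x.1 * pβ n x.2)) (μα.prod μβ) :=
        (hindα.mul_prod (hpβint n)).const_mul M
      have hI3 : Integrable (fun x : ↥Θα × ↥Θβ =>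
          M * (pα n x.1 * Sβ.indicator (pβ n) x.2)) (μα.prod μβ) :=
        ((hpαint n).mul_prod hindβ).const_mul M
      calc (∫ x, pα n x.1 * pβ n x.2 * |B n x.1 x.2| ∂(μα.prod μβ))
          ≤ ∫ x : ↥Θα × ↥Θβ,
            ((|B n ⟨αstar, hαstar⟩ ⟨β0, hβ0⟩| + 2 * L' * δ) * (pα n x.1 * pβ n x.2)
              + M * (Sα.indicator (pα n) x.1 * pβ n x.2)
              + M * (pα n x.1 * Sβ.indicator (pβ n) x.2)) ∂(μα.prod μβ) :=
            integral_mono (hpBint n) ((hI1.add hI2).add hI3) (hpt n)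
        _ = (|B n ⟨αstar, hαstar⟩ ⟨β0, hβ0⟩| + 2 * L' * δ)
            + M * (∫ a in Sα, pα n a ∂μα) + M * (∫ b in Sβ, pβ n b ∂μβ) := by
            have hI12 : Integrable (fun x : ↥Θα × ↥Θβ =>
                (|B n ⟨αstar, hαstar⟩ ⟨β0, hβ0⟩| + 2 * L' * δ) * (pα n x.1 * pβ n x.2)
                  + M * (Sα.indicator (pα n) x.1 * pβ n x.2)) (μα.prod μβ) := hI1.add hI2
            rw [integral_add hI12 hI3, integral_add hI1 hI2,
              integral_const_mul, integral_const_mul, integral_const_mul,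
              hpone n, integral_prod_mul, integral_prod_mul,
              integral_indicator hSαmeas, integral_indicator hSβmeas,
              hpαdens n, hpβdens n, mul_one, mul_one, one_mul]
    -- bound tends to 2 L' δ < ε
    have hIαtend := hconcα δ hδpos
    have hIβtend := hconcβ δ hδpos
    have hbndtend : Tendsto (fun n =>
        (|B n ⟨αstar, hαstar⟩ ⟨β0, hβ0⟩| + 2 * L' * δ)
          + M * (∫ a in Sα, pα n a ∂μα) + M * (∫ b in Sβ, pβ n b ∂μβ)) atTop
        (nhds (2 * L' * δ)) := by
      have h1 : Tendsto (fun n => |B n ⟨αstar, hαstar⟩ ⟨β0, hβ0⟩| + 2 * L' * δ)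
          atTop (nhds (0 + 2 * L' * δ)) := by
        have habs : Tendsto (fun n => |B n ⟨αstar, hαstar⟩ ⟨β0, hβ0⟩|) atTop (nhds 0) := by
          simpa using hB0.abs
        exact habs.add tendsto_const_nhds
      have h2 : Tendsto (fun n => M * (∫ a in Sα, pα n a ∂μα)) atTop (nhds (M * 0)) :=
        hIαtend.const_mul M
      have h3 : Tendsto (fun n => M * (∫ b in Sβ, pβ n b ∂μβ)) atTop (nhds (M * 0)) :=
        hIβtend.const_mul M
      have := (h1.add h2).add h3
      simpa using this
    have hlt : 2 * L' * δ < ε := by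
      rw [hδdef]
      rw [mul_div_assoc', div_lt_iff₀ (by positivity : (0:ℝ) < 4 * (L' + 1))]
      nlinarith
    have hev : ∀ᶠ n in atTop,
        (|B n ⟨αstar, hαstar⟩ ⟨β0, hβ0⟩| + 2 * L' * δ)
          + M * (∫ a in Sα, pα n a ∂μα) + M * (∫ b in Sβ, pβ n b ∂μβ) < ε :=
      hbndtend.eventually_lt_const hlt
    obtain ⟨N, hN⟩ := eventually_atTop.mp hev
    refine ⟨N, fun n hn => ?_⟩
    rw [Real.dist_eq, sub_zero, abs_of_nonneg (hHnonneg n)]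
    exact lt_of_le_of_lt (hint_le n) (hN n hn)
  -- final squeeze
  have hbound : ∀ n, (∫ x,
      |Real.exp (lam * B n x.1 x.2) * (pα n x.1 * pβ n x.2)
          / (∫ x', Real.exp (lam * B n x'.1 x'.2) * (pα n x'.1 * pβ n x'.2) ∂(μα.prod μβ))
        - pα n x.1 * pβ n x.2| ∂(μα.prod μβ))
      ≤ 2 * |lam| * C * C * (∫ x, pα n x.1 * pβ n x.2 * |B n x.1 x.2| ∂(μα.prod μβ)) := by
    intro n
    set z : ℝ := ∫ x', Real.exp (lam * B n x'.1 x'.2) * (pα n x'.1 * pβ n x'.2) ∂(μα.prod μβ)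
      with hzdef
    have hz0 : 0 < z := hzpos n
    have hzC : z⁻¹ ≤ C := by
      have h1 : C⁻¹ ≤ z := by
        rw [← Real.exp_neg]
        exact hzlb n
      calc z⁻¹ ≤ (C⁻¹)⁻¹ := by
            apply inv_anti₀ (by positivity) h1
        _ = C := inv_inv C
    -- per-point exponential estimate
    have hexp1 : ∀ x : ↥Θα × ↥Θβ,
        |Real.exp (lam * B n x.1 x.2) - 1| ≤ |lam| * C * |B n x.1 x.2| := by
      intro x
      calc |Real.exp (lam * B n x.1 x.2) - 1|
          ≤ |lam * B n x.1 x.2| * Real.exp |lam * B n x.1 x.2| :=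
            aux_abs_exp_sub_one_le _
        _ ≤ (|lam| * |B n x.1 x.2|) * C := by
            apply mul_le_mul (le_of_eq (abs_mul _ _)) (Real.exp_le_exp.mpr (habsB n x))
              (Real.exp_pos _).le (by positivity)
        _ = |lam| * C * |B n x.1 x.2| := by ring
    -- |1 - z| bound
    have hDle : |1 - z| ≤ |lam| * C
        * (∫ x, pα n x.1 * pβ n x.2 * |B n x.1 x.2| ∂(μα.prod μβ)) := by
      have he : (1:ℝ) - z = ∫ x : ↥Θα × ↥Θβ,
          (pα n x.1 * pβ n x.2 - Real.exp (lam * B n x.1 x.2) * (pα n x.1 * pβ n x.2))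
          ∂(μα.prod μβ) := by
        rw [integral_sub (hpint n) (hfint n), hpone n, hzdef]
      rw [he]
      calc |∫ x : ↥Θα × ↥Θβ,
          (pα n x.1 * pβ n x.2 - Real.exp (lam * B n x.1 x.2) * (pα n x.1 * pβ n x.2))
          ∂(μα.prod μβ)|
          ≤ ∫ x : ↥Θα × ↥Θβ,
            |pα n x.1 * pβ n x.2 - Real.exp (lam * B n x.1 x.2) * (pα n x.1 * pβ n x.2)|
            ∂(μα.prod μβ) := by
            simpa [Real.norm_eq_abs] using
              norm_integral_le_integral_norm (μ := μα.prod μβ)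
                (f := fun x : ↥Θα × ↥Θβ =>
                  pα n x.1 * pβ n x.2 - Real.exp (lam * B n x.1 x.2) * (pα n x.1 * pβ n x.2))
        _ ≤ ∫ x : ↥Θα × ↥Θβ,
            |lam| * C * (pα n x.1 * pβ n x.2 * |B n x.1 x.2|) ∂(μα.prod μβ) := by
            apply integral_mono ((hpint n).sub (hfint n)).abs ((hpBint n).const_mul _)
            intro x
            simp only [Pi.sub_apply]
            have h0 : pα n x.1 * pβ n x.2 - Real.exp (lam * B n x.1 x.2)
                * (pα n x.1 * pβ n x.2)
                = (pα n x.1 * pβ n x.2) * (1 - Real.exp (lam * B n x.1 x.2)) := by ring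
            rw [h0, abs_mul, abs_of_nonneg (hpnonneg n x), abs_sub_comm]
            calc pα n x.1 * pβ n x.2 * |Real.exp (lam * B n x.1 x.2) - 1|
                ≤ pα n x.1 * pβ n x.2 * (|lam| * C * |B n x.1 x.2|) :=
                  mul_le_mul_of_nonneg_left (hexp1 x) (hpnonneg n x)
              _ = |lam| * C * (pα n x.1 * pβ n x.2 * |B n x.1 x.2|) := by ring
        _ = |lam| * C * (∫ x, pα n x.1 * pβ n x.2 * |B n x.1 x.2| ∂(μα.prod μβ)) :=
          integral_const_mul _ _
    -- pointwise bound on total variation integrand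
    have hptTV : ∀ x : ↥Θα × ↥Θβ,
        |Real.exp (lam * B n x.1 x.2) * (pα n x.1 * pβ n x.2) / z - pα n x.1 * pβ n x.2|
          ≤ C * (|lam| * C * (pα n x.1 * pβ n x.2 * |B n x.1 x.2|)
              + |1 - z| * (pα n x.1 * pβ n x.2)) := by
      intro x
      have he : Real.exp (lam * B n x.1 x.2) * (pα n x.1 * pβ n x.2) / z
          - pα n x.1 * pβ n x.2
          = (Real.exp (lam * B n x.1 x.2) - z) * (pα n x.1 * pβ n x.2) * z⁻¹ := by
        field_simp
      rw [he, abs_mul, abs_mul, abs_of_nonneg (hpnonneg n x),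
        abs_of_nonneg (inv_nonneg.mpr hz0.le)]
      have hA : |Real.exp (lam * B n x.1 x.2) - z|
          ≤ |lam| * C * |B n x.1 x.2| + |1 - z| := by
        calc |Real.exp (lam * B n x.1 x.2) - z|
            ≤ |Real.exp (lam * B n x.1 x.2) - 1| + |1 - z| := abs_sub_le _ 1 _
          _ ≤ |lam| * C * |B n x.1 x.2| + |1 - z| := by linarith [hexp1 x]
      calc |Real.exp (lam * B n x.1 x.2) - z| * (pα n x.1 * pβ n x.2) * z⁻¹
          ≤ (|lam| * C * |B n x.1 x.2| + |1 - z|) * (pα n x.1 * pβ n x.2) * C := by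
            apply mul_le_mul (mul_le_mul_of_nonneg_right hA (hpnonneg n x)) hzC
              (inv_nonneg.mpr hz0.le)
            have : (0:ℝ) ≤ |lam| * C * |B n x.1 x.2| + |1 - z| := by positivity
            exact mul_nonneg this (hpnonneg n x)
        _ = C * (|lam| * C * (pα n x.1 * pβ n x.2 * |B n x.1 x.2|)
              + |1 - z| * (pα n x.1 * pβ n x.2)) := by ring
    -- integrate
    have hTVint : Integrable (fun x : ↥Θα × ↥Θβ =>
        |Real.exp (lam * B n x.1 x.2) * (pα n x.1 * pβ n x.2) / z - pα n x.1 * pβ n x.2|)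
        (μα.prod μβ) :=
      (((hfint n).div_const z).sub (hpint n)).abs
    have hRHSint : Integrable (fun x : ↥Θα × ↥Θβ =>
        C * (|lam| * C * (pα n x.1 * pβ n x.2 * |B n x.1 x.2|)
          + |1 - z| * (pα n x.1 * pβ n x.2))) (μα.prod μβ) :=
      (((hpBint n).const_mul _).add ((hpint n).const_mul _)).const_mul C
    calc (∫ x,
        |Real.exp (lam * B n x.1 x.2) * (pα n x.1 * pβ n x.2) / z - pα n x.1 * pβ n x.2|
        ∂(μα.prod μβ))
        ≤ ∫ x : ↥Θα × ↥Θβ, C * (|lam| * C * (pα n x.1 * pβ n x.2 * |B n x.1 x.2|)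
            + |1 - z| * (pα n x.1 * pβ n x.2)) ∂(μα.prod μβ) :=
          integral_mono hTVint hRHSint hptTV
      _ = C * (|lam| * C
            * (∫ x, pα n x.1 * pβ n x.2 * |B n x.1 x.2| ∂(μα.prod μβ)) + |1 - z| * 1) := by
          rw [integral_const_mul, integral_add ((hpBint n).const_mul _) ((hpint n).const_mul _),
            integral_const_mul, integral_const_mul, hpone n]
      _ ≤ C * (|lam| * C
            * (∫ x, pα n x.1 * pβ n x.2 * |B n x.1 x.2| ∂(μα.prod μβ))
            + (|lam| * C * (∫ x, pα n x.1 * pβ n x.2 * |B n x.1 x.2| ∂(μα.prod μβ))) * 1) := by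
          apply mul_le_mul_of_nonneg_left _ hCpos.le
          apply add_le_add_right
          exact mul_le_mul_of_nonneg_right hDle zero_le_one
      _ = 2 * |lam| * C * C
          * (∫ x, pα n x.1 * pβ n x.2 * |B n x.1 x.2| ∂(μα.prod μβ)) := by ring
  have hTVnonneg : ∀ n, 0 ≤ ∫ x,
      |Real.exp (lam * B n x.1 x.2) * (pα n x.1 * pβ n x.2)
          / (∫ x', Real.exp (lam * B n x'.1 x'.2) * (pα n x'.1 * pβ n x'.2) ∂(μα.prod μβ))
        - pα n x.1 * pβ n x.2| ∂(μα.prod μβ) :=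
    fun n => integral_nonneg fun x => abs_nonneg _
  refine squeeze_zero hTVnonneg hbound ?_
  have := hHtend.const_mul (2 * |lam| * C * C)
  simpa using this
end
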